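/- arXiv:2505.17531 — 6 statements merged into one kernel-verified Lean document; each statement's English description precedes it below -/
import Mathlib

section
/- There is no binary linear code of effective length 1 all of whose nonzero codewords have weight divisible by 4, other than the zero code of length 0; equivalently, a nonzero 4-divisible binary linear code of full length has length at least 4. Consequently, an 8-divisible binary linear code of length 65 and minimum distance ≥ 24 contains no codeword of weight 64. -/
open Finset

/-- Hamming weight of a binary word. -/
def wt {n : ℕ} (x : Fin n → ZMod 2) : ℕ := hammingNorm x

/-- The dual code of a binary linear code. -/
def dualCode {n : ℕ} (C : Submodule (ZMod 2) (Fin n → ZMod 2)) :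
    Submodule (ZMod 2) (Fin n → ZMod 2) where
  carrier := {x | ∀ c ∈ C, ∑ i, x i * c i = 0}
  zero_mem' := by intro c _; simp
  add_mem' := by
    intro a b ha hb c hc
    have h : ∑ i, (a + b) i * c i = (∑ i, a i * c i) + ∑ i, b i * c i := by
      rw [← Finset.sum_add_distrib]
      exact Finset.sum_congr rfl fun i _ => by simp [add_mul]
    simp only [Set.mem_setOf_eq] at *
    rw [h, ha c hc, hb c hc, add_zero]
  smul_mem' := by
    intro r a ha c hc
    have h : ∑ i, (r • a) i * c i = r * ∑ i, a i * c i := by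
      rw [Finset.mul_sum]
      exact Finset.sum_congr rfl fun i _ => by simp [mul_assoc]
    simp only [Set.mem_setOf_eq] at *
    rw [h, ha c hc, mul_zero]

/-- A code has full (effective) length if every coordinate is in the support of
some codeword. -/
def FullLength {n : ℕ} (C : Submodule (ZMod 2) (Fin n → ZMod 2)) : Prop :=
  ∀ i : Fin n, ∃ c ∈ C, c i ≠ 0

/-- The weight distribution: `wd C i` is the number of codewords of `C` of weight `i`. -/
noncomputable def wd {n : ℕ} (C : Submodule (ZMod 2) (Fin n → ZMod 2)) (i : ℕ) : ℕ :=
  Nat.card {c : Fin n → ZMod 2 // c ∈ C ∧ wt c = i}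


lemma zmod2_cases (a : ZMod 2) : a = 0 ∨ a = 1 := by revert a; decide

lemma wt_eq_sum {n : ℕ} (x : Fin n → ZMod 2) :
    wt x = ∑ i, if x i ≠ 0 then 1 else 0 := by
  simp [wt, hammingNorm, Finset.card_filter]

theorem stmt6 :
    (∀ (m : ℕ) (C : Submodule (ZMod 2) (Fin m → ZMod 2)),
      FullLength C → (∀ c ∈ C, 4 ∣ wt c) → C ≠ ⊥ → 4 ≤ m) ∧
    (∀ C : Submodule (ZMod 2) (Fin 65 → ZMod 2),
      FullLength C → (∀ c ∈ C, 8 ∣ wt c) → (∀ c ∈ C, c ≠ 0 → 24 ≤ wt c) →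
      ∀ c ∈ C, wt c ≠ 64) := by
  constructor
  · intro m C _ hdiv hne
    obtain ⟨c, hc, hc0⟩ := Submodule.exists_mem_ne_zero_of_ne_bot hne
    have hw0 : wt c ≠ 0 := by
      simpa [wt, hammingNorm_eq_zero] using hc0
    have h4 : 4 ∣ wt c := hdiv c hc
    have hle : wt c ≤ m := by
      have := hammingDist_le_card_fintype (x := c) (y := (0 : Fin m → ZMod 2))
      simpa [wt] using this
    omega
  · intro C hfull hdiv _ c hc hw
    -- the zero set of c has exactly one element
    have hwt : #(Finset.univ.filter fun i => c i ≠ 0) = 64 := hw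
    have hcard : #(Finset.univ.filter fun i => c i = 0) = 1 := by
      have := Finset.card_filter_add_card_filter_not
        (s := (Finset.univ : Finset (Fin 65))) (p := fun i => c i = 0)
      simp only [Finset.card_univ, Fintype.card_fin] at this
      have h2 : #(Finset.univ.filter fun i => ¬ c i = 0) = 64 := hwt
      omega
    obtain ⟨i₀, hi₀⟩ := Finset.card_eq_one.mp hcard
    have hci₀ : c i₀ = 0 := by
      have : i₀ ∈ Finset.univ.filter fun i => c i = 0 := by rw [hi₀]; simp
      simpa using this
    have hcone : ∀ j, j ≠ i₀ → c j = 1 := by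
      intro j hj
      rcases zmod2_cases (c j) with h | h
      · exfalso
        have : j ∈ Finset.univ.filter fun i => c i = 0 := by simpa using h
        rw [hi₀] at this
        exact hj (Finset.mem_singleton.mp this)
      · exact h
    obtain ⟨d, hd, hd0⟩ := hfull i₀
    have hdi₀ : d i₀ = 1 := (zmod2_cases (d i₀)).resolve_left hd0
    have key : wt d + wt (c + d) = 66 := by
      rw [wt_eq_sum, wt_eq_sum, ← Finset.sum_add_distrib]
      have hpt : ∀ i : Fin 65,
          ((if d i ≠ 0 then 1 else 0) + (if (c + d) i ≠ 0 then 1 else 0))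
            = if i = i₀ then 2 else 1 := by
        intro i
        by_cases hi : i = i₀
        · subst hi
          simp [hdi₀, hci₀]
        · have hc1 := hcone i hi
          have h11 : (1 : ZMod 2) + 1 = 0 := by decide
          rcases zmod2_cases (d i) with h | h <;> simp [hi, hc1, h, h11]
      rw [Finset.sum_congr rfl fun i _ => hpt i]
      have hsplit : ∀ i : Fin 65, (if i = i₀ then 2 else 1 : ℕ)
          = 1 + if i = i₀ then 1 else 0 := by intro i; split <;> rfl
      rw [Finset.sum_congr rfl fun i _ => hsplit i, Finset.sum_add_distrib,
        Finset.sum_const, Finset.sum_ite_eq' Finset.univ i₀ fun _ => 1]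
      simp
    have h1 : 8 ∣ wt d := hdiv d hd
    have h2 : 8 ∣ wt (c + d) := hdiv (c + d) (C.add_mem hc hd)
    omega
end

section
/- There is no full-length 4-divisible binary linear code of effective length 9. Consequently, an 8-divisible binary linear code of full effective length 65 contains no codeword of weight 56. -/
open Finset

lemma wt_eq_card {n : ℕ} (x : Fin n → ZMod 2) :
    wt x = (univ.filter fun i => x i ≠ 0).card := rfl

lemma eight_unique (C : Submodule (ZMod 2) (Fin 9 → ZMod 2)) (hdiv : ∀ c ∈ C, 4 ∣ wt c)
    (c d : Fin 9 → ZMod 2) (hc : c ∈ C) (hd : d ∈ C) (h8c : wt c = 8) (h8d : wt d = 8) :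
    c = d := by
  classical
  have hsum : wt (c + d) ≤ 2 := by
    have hsub : (univ.filter fun i => (c + d) i ≠ 0) ⊆
        (univ.filter fun i => c i = 0) ∪ (univ.filter fun i => d i = 0) := by
      intro i hi
      simp only [Finset.mem_filter, Finset.mem_univ, true_and, Pi.add_apply,
        Finset.mem_union] at *
      by_contra h
      push_neg at h
      have h1 : ∀ x : ZMod 2, x ≠ 0 → x = 1 := by decide
      rw [h1 _ h.1, h1 _ h.2] at hi
      exact hi (by decide)
    have hcard0 : (univ.filter fun i => c i = 0).card = 1 := by
      have h3 := Finset.card_filter_add_card_filter_not (s := (univ : Finset (Fin 9)))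
        (p := fun i => c i = 0)
      have h2 : (univ.filter fun i => ¬ c i = 0).card = 8 := h8c
      simp only [Finset.card_univ, Fintype.card_fin] at h3
      omega
    have hcard1 : (univ.filter fun i => d i = 0).card = 1 := by
      have h3 := Finset.card_filter_add_card_filter_not (s := (univ : Finset (Fin 9)))
        (p := fun i => d i = 0)
      have h2 : (univ.filter fun i => ¬ d i = 0).card = 8 := h8d
      simp only [Finset.card_univ, Fintype.card_fin] at h3
      omega
    calc wt (c + d) ≤ ((univ.filter fun i => c i = 0) ∪ (univ.filter fun i => d i = 0)).card :=
          Finset.card_le_card hsub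
      _ ≤ _ := Finset.card_union_le _ _
      _ ≤ 2 := by omega
  have hdvd : 4 ∣ wt (c + d) := hdiv _ (C.add_mem hc hd)
  have h0 : wt (c + d) = 0 := by omega
  have hz : c + d = 0 := hammingNorm_eq_zero.mp h0
  funext i
  have h1 : ∀ x y : ZMod 2, x + y = 0 → x = y := by decide
  exact h1 _ _ (congrFun hz i)

lemma no9 (C : Submodule (ZMod 2) (Fin 9 → ZMod 2)) (hdiv : ∀ c ∈ C, 4 ∣ wt c) :
    ¬ FullLength C := by
  classical
  intro hfl
  set F : Finset (Fin 9 → ZMod 2) := univ.filter (· ∈ C) with hF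
  have hmemF : ∀ x, x ∈ F ↔ x ∈ C := by
    intro x; simp [hF]
  clear_value F
  -- column counting
  have hcol : ∀ i : Fin 9, F.card = 2 * (F.filter fun x => x i ≠ 0).card := by
    intro i
    obtain ⟨e, heC, hei⟩ := hfl i
    have hsplit := Finset.card_filter_add_card_filter_not (s := F)
      (p := fun x => x i ≠ 0)
    have hbij : (F.filter fun x => x i ≠ 0).card = (F.filter fun x => ¬ x i ≠ 0).card := by
      apply Finset.card_bij (fun x _ => x + e)
      · intro x hx
        simp only [Finset.mem_filter, hmemF] at hx ⊢
        refine ⟨C.add_mem hx.1 heC, ?_⟩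
        have h1 : ∀ a b : ZMod 2, a ≠ 0 → b ≠ 0 → ¬ a + b ≠ 0 := by decide
        exact h1 _ _ hx.2 hei
      · intro x hx y hy hxy
        have := congrArg (· + e) hxy
        simpa [add_assoc, CharTwo.add_self_eq_zero] using this
      · intro y hy
        refine ⟨y + e, ?_, ?_⟩
        · simp only [Finset.mem_filter, hmemF] at hy ⊢
          refine ⟨C.add_mem hy.1 heC, ?_⟩
          have h1 : ∀ a b : ZMod 2, ¬ a ≠ 0 → b ≠ 0 → a + b ≠ 0 := by decide
          exact h1 _ _ hy.2 hei
        · simp [add_assoc, CharTwo.add_self_eq_zero]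
    rw [← hsplit, hbij]
    exact (two_mul _).symm
  -- weights classification
  have hwt : ∀ x ∈ F, wt x = 0 ∨ wt x = 4 ∨ wt x = 8 := by
    intro x hx
    have h1 : 4 ∣ wt x := hdiv x ((hmemF x).1 hx)
    have h2 : wt x ≤ 9 := by
      rw [wt_eq_card]
      exact le_trans (Finset.card_le_card (Finset.filter_subset _ _)) (by simp)
    omega
  have h0mem : (0 : Fin 9 → ZMod 2) ∈ F := (hmemF 0).2 C.zero_mem
  have hN : 1 ≤ F.card := Finset.card_pos.mpr ⟨0, h0mem⟩
  -- counts
  set a := (F.filter fun x => wt x = 4).card with ha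
  set b := (F.filter fun x => wt x = 8).card with hb
  have hb1 : b ≤ 1 := by
    rw [hb]
    apply Finset.card_le_one.mpr
    intro x hx y hy
    simp only [Finset.mem_filter, hmemF] at hx hy
    exact eight_unique C hdiv x y hx.1 hy.1 hx.2 hy.2
  have hzero : (F.filter fun x => wt x = 0) = {0} := by
    apply Finset.ext
    intro x
    simp only [Finset.mem_filter, Finset.mem_singleton]
    constructor
    · rintro ⟨_, h⟩; exact hammingNorm_eq_zero.mp h
    · rintro rfl; exact ⟨h0mem, hammingNorm_zero⟩
  have hcardsplit : F.card = 1 + a + b := by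
    have h1 := Finset.card_filter_add_card_filter_not (s := F)
      (p := fun x => wt x = 0)
    have h2 : F.filter (fun x => ¬ wt x = 0) = F.filter (fun x => wt x = 4 ∨ wt x = 8) := by
      apply Finset.filter_congr
      intro x hx
      have := hwt x hx
      omega
    have h3 : F.filter (fun x => wt x = 4 ∨ wt x = 8) =
        (F.filter fun x => wt x = 4) ∪ (F.filter fun x => wt x = 8) := Finset.filter_or _ _ _
    have h4 : Disjoint (F.filter fun x => wt x = 4) (F.filter fun x => wt x = 8) := by
      rw [Finset.disjoint_left]
      intro x hx hy
      simp only [Finset.mem_filter] at hx hy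
      omega
    rw [hzero, Finset.card_singleton] at h1
    rw [h2, h3, Finset.card_union_of_disjoint h4] at h1
    omega
  -- total weight
  have htot : ∑ x ∈ F, wt x = 4 * a + 8 * b := by
    have hpart : ∀ x ∈ F, wt x = (if wt x = 4 then 4 else 0) + (if wt x = 8 then 8 else 0) := by
      intro x hx
      have := hwt x hx
      split_ifs <;> omega
    calc ∑ x ∈ F, wt x = ∑ x ∈ F, ((if wt x = 4 then 4 else 0) + (if wt x = 8 then 8 else 0)) :=
          Finset.sum_congr rfl hpart
      _ = (∑ x ∈ F, if wt x = 4 then 4 else 0) + ∑ x ∈ F, if wt x = 8 then 8 else 0 :=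
          Finset.sum_add_distrib
      _ = 4 * a + 8 * b := by
          rw [← Finset.sum_filter, ← Finset.sum_filter, Finset.sum_const, Finset.sum_const,
            smul_eq_mul, smul_eq_mul]
          omega
  -- double counting
  have hdc : 2 * ∑ x ∈ F, wt x = 9 * F.card := by
    have h1 : ∑ x ∈ F, wt x = ∑ i : Fin 9, (F.filter fun x => x i ≠ 0).card := by
      calc ∑ x ∈ F, wt x = ∑ x ∈ F, ∑ i : Fin 9, if x i ≠ 0 then 1 else 0 :=
            Finset.sum_congr rfl fun x _ => wt_eq_sum x
        _ = ∑ i : Fin 9, ∑ x ∈ F, if x i ≠ 0 then 1 else 0 := Finset.sum_comm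
        _ = _ := Finset.sum_congr rfl fun i _ => (Finset.card_filter _ _).symm
    rw [h1, Finset.mul_sum]
    calc ∑ i : Fin 9, 2 * (F.filter fun x => x i ≠ 0).card = ∑ i : Fin 9, F.card :=
          Finset.sum_congr rfl fun i _ => (hcol i).symm
      _ = 9 * F.card := by simp [mul_comm]
  omega

lemma part2 (C : Submodule (ZMod 2) (Fin 65 → ZMod 2)) (hfl : FullLength C)
    (hdiv : ∀ c ∈ C, 8 ∣ wt c) : ∀ c ∈ C, wt c ≠ 56 := by
  classical
  intro c hc h56
  -- complement of support of c
  set T : Finset (Fin 65) := univ.filter (fun i => c i = 0) with hT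
  have hTcard : T.card = 9 := by
    have h : T.card + wt c = 65 := by
      rw [hT, wt_eq_sum, Finset.card_filter, ← Finset.sum_add_distrib]
      have h1 : ∀ i : Fin 65, ((if c i = 0 then 1 else 0) + if c i ≠ 0 then 1 else 0 : ℕ) = 1 := by
        intro i; split_ifs with ha hb <;> simp_all
      rw [Finset.sum_congr rfl fun i _ => h1 i]
      simp
    omega
  set e : Fin 9 ≃ T := (Finset.equivFinOfCardEq hTcard).symm with he
  set g : Fin 9 → Fin 65 := fun j => (e j : Fin 65) with hg
  have hginj : Function.Injective g := by
    intro x y hxy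
    exact e.injective (Subtype.ext hxy)
  have hgT : ∀ j, c (g j) = 0 := by
    intro j
    have := (e j).2
    simp only [hT, Finset.mem_filter] at this
    exact this.2
  have hgsurj : ∀ i : Fin 65, c i = 0 → ∃ j, g j = i := by
    intro i hi
    have hiT : i ∈ T := by simp [hT, hi]
    exact ⟨e.symm ⟨i, hiT⟩, by simp [hg]⟩
  set φ : (Fin 65 → ZMod 2) →ₗ[ZMod 2] (Fin 9 → ZMod 2) :=
    LinearMap.funLeft (ZMod 2) (ZMod 2) g with hφ
  have hφapp : ∀ (d : Fin 65 → ZMod 2) (j : Fin 9), φ d j = d (g j) := fun _ _ => rfl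
  set D : Submodule (ZMod 2) (Fin 9 → ZMod 2) := C.map φ with hD
  -- weight of restriction
  have hres : ∀ d : Fin 65 → ZMod 2,
      wt (φ d) = (univ.filter fun i : Fin 65 => d i ≠ 0 ∧ c i = 0).card := by
    intro d
    rw [wt_eq_card]
    apply Finset.card_bij (fun j _ => g j)
    · intro j hj
      simp only [Finset.mem_filter, Finset.mem_univ, true_and, hφapp] at hj ⊢
      exact ⟨hj, hgT j⟩
    · intro x _ y _ hxy
      exact hginj hxy
    · intro i hi
      simp only [Finset.mem_filter, Finset.mem_univ, true_and] at hi
      obtain ⟨j, rfl⟩ := hgsurj i hi.2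
      exact ⟨j, by simp only [Finset.mem_filter, Finset.mem_univ, true_and, hφapp]; exact hi.1, rfl⟩
  -- overlap divisibility
  have hkey : ∀ d ∈ C, 4 ∣ (univ.filter fun i : Fin 65 => d i ≠ 0 ∧ c i ≠ 0).card := by
    intro d hd
    have h1 : wt (d + c) + 2 * (univ.filter fun i : Fin 65 => d i ≠ 0 ∧ c i ≠ 0).card
        = wt d + wt c := by
      rw [wt_eq_sum, wt_eq_sum, wt_eq_sum, Finset.card_filter, Finset.mul_sum,
        ← Finset.sum_add_distrib, ← Finset.sum_add_distrib]
      apply Finset.sum_congr rfl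
      intro i _
      have hxy : ∀ x y : ZMod 2, ((if x + y ≠ 0 then 1 else 0) + 2 * (if x ≠ 0 ∧ y ≠ 0 then 1 else 0) : ℕ)
          = (if x ≠ 0 then 1 else 0) + (if y ≠ 0 then 1 else 0) := by decide
      exact hxy (d i) (c i)
    have h2 : 8 ∣ wt (d + c) := hdiv _ (C.add_mem hd hc)
    have h3 : 8 ∣ wt d := hdiv d hd
    generalize hm : (univ.filter fun i : Fin 65 => d i ≠ 0 ∧ c i ≠ 0).card = m at h1 ⊢
    omega
  have hsplitwt : ∀ d : Fin 65 → ZMod 2,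
      wt d = (univ.filter fun i : Fin 65 => d i ≠ 0 ∧ c i = 0).card
           + (univ.filter fun i : Fin 65 => d i ≠ 0 ∧ c i ≠ 0).card := by
    intro d
    rw [wt_eq_sum, Finset.card_filter, Finset.card_filter, ← Finset.sum_add_distrib]
    apply Finset.sum_congr rfl
    intro i _
    have hxy : ∀ x y : ZMod 2, ((if x ≠ 0 then 1 else 0) : ℕ)
        = (if x ≠ 0 ∧ y = 0 then 1 else 0) + (if x ≠ 0 ∧ y ≠ 0 then 1 else 0) := by decide
    exact hxy (d i) (c i)
  -- D is 4-divisible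
  have hDdiv : ∀ x ∈ D, 4 ∣ wt x := by
    intro x hx
    obtain ⟨d, hd, rfl⟩ := hx
    rw [hres d]
    have h1 := hsplitwt d
    have h2 := hkey d hd
    have h3 : 8 ∣ wt d := hdiv d hd
    generalize hm : (univ.filter fun i : Fin 65 => d i ≠ 0 ∧ c i ≠ 0).card = m at h1 h2
    generalize hk : (univ.filter fun i : Fin 65 => d i ≠ 0 ∧ c i = 0).card = k at h1 ⊢
    omega
  -- D has full length
  have hDfull : FullLength D := by
    intro j
    obtain ⟨d, hd, hdi⟩ := hfl (g j)
    exact ⟨φ d, ⟨d, hd, rfl⟩, by rw [hφapp]; exact hdi⟩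
  exact no9 D hDdiv hDfull

theorem stmt7 :
    (∀ C : Submodule (ZMod 2) (Fin 9 → ZMod 2),
      (∀ c ∈ C, 4 ∣ wt c) → ¬ FullLength C) ∧
    (∀ C : Submodule (ZMod 2) (Fin 65 → ZMod 2),
      FullLength C → (∀ c ∈ C, 8 ∣ wt c) → ∀ c ∈ C, wt c ≠ 56) :=
  ⟨no9, part2⟩
end

section
/- Let C be an 8-divisible binary linear code of full effective length n ≤ 65, dimension 12, and minimum distance ≥ 24, with weight distribution (a_i) and dual weight distribution (a_i^*). If C has no codewords of weight 56 or 64 beyond those counted, then a_40 = (205/2)n² − 6808n − (1/2)n³ + (208 − 3n)a_2^* + 3a_3^* + 6a_56 + 20a_64 + 147420. -/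
open Finset

/-! ### Auxiliary lemmas -/

section PM
variable {n : ℕ}

/-- standard basis vector -/
def pmsv {n : ℕ} (i : Fin n) : Fin n → ZMod 2 := Pi.single i 1

lemma pmsv_apply (i m : Fin n) : pmsv i m = if m = i then 1 else 0 := Pi.single_apply i 1 m

lemma pm_dot_single (i : Fin n) (c : Fin n → ZMod 2) :
    ∑ j, pmsv i j * c j = c i := by
  rw [Finset.sum_eq_single i]
  · simp [pmsv_apply]
  · intro b _ hb; simp [pmsv_apply, hb]
  · simp

lemma pm_dot_add (v w c : Fin n → ZMod 2) :
    ∑ j, (v+w) j * c j = (∑ j, v j * c j) + ∑ j, w j * c j := by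
  rw [← Finset.sum_add_distrib]
  exact Finset.sum_congr rfl fun j _ => by simp [add_mul]

lemma pm_wt_eq_sum (x : Fin n → ZMod 2) : (wt x : ℚ) = ∑ i, ((x i).val : ℚ) := by
  have h : ∀ a : ZMod 2, ((a.val : ℚ)) = if a ≠ 0 then 1 else 0 := by decide
  rw [wt, hammingNorm, Finset.card_filter]
  push_cast
  refine Finset.sum_congr rfl fun i _ => ?_
  rw [h]

lemma pmsv_add_self (i : Fin n) : pmsv i + pmsv i = 0 := by
  funext m; simp [CharTwo.add_self_eq_zero]

lemma pm_wt_sv2 {a b : Fin n} (hab : a ≠ b) : wt (pmsv a + pmsv b) = 2 := by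
  rw [wt, hammingNorm]
  have h : ({i | (pmsv a + pmsv b) i ≠ 0} : Finset (Fin n)) = {a, b} := by
    ext m
    by_cases hma : m = a <;> by_cases hmb : m = b <;>
      simp_all [pmsv_apply, Ne.symm]
  rw [h, Finset.card_pair hab]

lemma pm_wt_sv3 {a b c : Fin n} (hab : a ≠ b) (hac : a ≠ c) (hbc : b ≠ c) :
    wt (pmsv a + pmsv b + pmsv c) = 3 := by
  rw [wt, hammingNorm]
  have h : ({i | (pmsv a + pmsv b + pmsv c) i ≠ 0} : Finset (Fin n)) = {a, b, c} := by
    ext m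
    by_cases hma : m = a <;> by_cases hmb : m = b <;> by_cases hmc : m = c <;>
      simp_all [pmsv_apply, Ne.symm]
  rw [h, Finset.card_insert_of_notMem (by simp [hab, hac]), Finset.card_pair hbc]

lemma pm_zmod2_ne_zero {z : ZMod 2} (h : z ≠ 0) : z = 1 := by revert h; revert z; decide

lemma pm_eq_of_wt_two {x : Fin n → ZMod 2} (hx : wt x = 2) :
    ∃ a b : Fin n, a ≠ b ∧ x = pmsv a + pmsv b := by
  rw [wt, hammingNorm] at hx
  obtain ⟨a, b, hab, hset⟩ := Finset.card_eq_two.mp hx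
  have hm : ∀ m, x m ≠ 0 ↔ (m = a ∨ m = b) := by
    intro m
    rw [show (x m ≠ 0) ↔ m ∈ ({i | x i ≠ 0} : Finset (Fin n)) by simp, hset]
    simp
  refine ⟨a, b, hab, funext fun m => ?_⟩
  by_cases hma : m = a
  · subst hma
    have := pm_zmod2_ne_zero ((hm m).mpr (Or.inl rfl))
    simp_all [pmsv_apply, hab]
  · by_cases hmb : m = b
    · subst hmb
      have := pm_zmod2_ne_zero ((hm m).mpr (Or.inr rfl))
      simp_all [pmsv_apply, Ne.symm hab]
    · have hx0 : x m = 0 := by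
        by_contra h
        rcases (hm m).mp h with h'|h' <;> [exact hma h'; exact hmb h']
      simp [pmsv_apply, hma, hmb, hx0]

lemma pm_eq_of_wt_three {x : Fin n → ZMod 2} (hx : wt x = 3) :
    ∃ a b c : Fin n, a ≠ b ∧ a ≠ c ∧ b ≠ c ∧ x = pmsv a + pmsv b + pmsv c := by
  rw [wt, hammingNorm] at hx
  obtain ⟨a, b, c, hab, hac, hbc, hset⟩ := Finset.card_eq_three.mp hx
  have hm : ∀ m, x m ≠ 0 ↔ (m = a ∨ m = b ∨ m = c) := by
    intro m
    rw [show (x m ≠ 0) ↔ m ∈ ({i | x i ≠ 0} : Finset (Fin n)) by simp, hset]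
    simp
  refine ⟨a, b, c, hab, hac, hbc, funext fun m => ?_⟩
  by_cases hma : m = a
  · subst hma
    have := pm_zmod2_ne_zero ((hm m).mpr (Or.inl rfl))
    simp_all [pmsv_apply, hab, hac]
  · by_cases hmb : m = b
    · subst hmb
      have := pm_zmod2_ne_zero ((hm m).mpr (Or.inr (Or.inl rfl)))
      simp_all [pmsv_apply, Ne.symm hab, hbc]
    · by_cases hmc : m = c
      · subst hmc
        have := pm_zmod2_ne_zero ((hm m).mpr (Or.inr (Or.inr rfl)))
        simp_all [pmsv_apply, Ne.symm hac, Ne.symm hbc]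
      · have hx0 : x m = 0 := by
          by_contra h
          rcases (hm m).mp h with h'|h'|h' <;> [exact hma h'; exact hmb h'; exact hmc h']
        simp [pmsv_apply, hma, hmb, hmc, hx0]

lemma pmsv2_ne_zero_iff {a b m : Fin n} (hab : a ≠ b) :
    (pmsv a + pmsv b) m ≠ 0 ↔ m = a ∨ m = b := by
  by_cases hma : m = a <;> by_cases hmb : m = b <;> simp_all [pmsv_apply, Ne.symm]

lemma pmsv3_ne_zero_iff {a b c m : Fin n} (hab : a ≠ b) (hac : a ≠ c) (hbc : b ≠ c) :
    (pmsv a + pmsv b + pmsv c) m ≠ 0 ↔ m = a ∨ m = b ∨ m = c := by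
  by_cases hma : m = a <;> by_cases hmb : m = b <;> by_cases hmc : m = c <;>
    simp_all [pmsv_apply, Ne.symm]

lemma pm_wd_eq_card (D : Submodule (ZMod 2) (Fin n → ZMod 2)) (w : ℕ)
    [DecidablePred (· ∈ D)] :
    wd D w = #(univ.filter fun x : Fin n → ZMod 2 => x ∈ D ∧ wt x = w) := by
  rw [wd, Nat.card_eq_fintype_card]
  convert Fintype.card_subtype (fun x : Fin n → ZMod 2 => x ∈ D ∧ wt x = w)

lemma pm_count2 (D : Submodule (ZMod 2) (Fin n → ZMod 2)) [DecidablePred (· ∈ D)] :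
    #(univ.filter fun p : Fin n × Fin n => pmsv p.1 + pmsv p.2 ∈ D) = n + 2 * wd D 2 := by
  classical
  set s := univ.filter fun p : Fin n × Fin n => pmsv p.1 + pmsv p.2 ∈ D with hs
  have hsplit := Finset.card_filter_add_card_filter_not
    (s := s) (p := fun p => p.1 = p.2)
  have hdiag : #(s.filter fun p => p.1 = p.2) = n := by
    have : (s.filter fun p => p.1 = p.2) = (univ : Finset (Fin n)).image fun i => (i, i) := by
      ext p
      simp only [hs, Finset.mem_filter, Finset.mem_univ, true_and, Finset.mem_image]
      constructor
      · rintro ⟨_, h2⟩; exact ⟨p.1, by rw [Prod.ext_iff]; exact ⟨rfl, h2⟩⟩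
      · rintro ⟨i, rfl⟩
        exact ⟨by rw [pmsv_add_self]; exact D.zero_mem, rfl⟩
    rw [this, Finset.card_image_of_injective _ (fun i j h => (Prod.ext_iff.mp h).1),
      Finset.card_univ, Fintype.card_fin]
  have hoff : #(s.filter fun p => ¬ p.1 = p.2) = 2 * wd D 2 := by
    rw [Finset.card_eq_sum_card_fiberwise
      (f := fun p : Fin n × Fin n => pmsv p.1 + pmsv p.2)
      (t := univ.filter fun x : Fin n → ZMod 2 => x ∈ D ∧ wt x = 2) ?_]
    · rw [Finset.sum_congr rfl (g := fun _ => 2) ?_, Finset.sum_const, pm_wd_eq_card,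
        smul_eq_mul, mul_comm]
      intro x hx
      simp only [Finset.mem_filter, Finset.mem_univ, true_and] at hx
      obtain ⟨hxD, hxw⟩ := hx
      obtain ⟨a, b, hab, rfl⟩ := pm_eq_of_wt_two hxw
      have : ((s.filter fun p => ¬ p.1 = p.2).filter
          fun p => pmsv p.1 + pmsv p.2 = pmsv a + pmsv b) = {(a, b), (b, a)} := by
        ext p
        simp only [hs, Finset.mem_filter, Finset.mem_univ, true_and,
          Finset.mem_insert, Finset.mem_singleton]
        constructor
        · rintro ⟨⟨hmem, hne⟩, heq⟩
          have h1 : p.1 = a ∨ p.1 = b := by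
            rw [← pmsv2_ne_zero_iff hab (m := p.1), ← heq]
            rw [pmsv2_ne_zero_iff hne]; tauto
          have h2 : p.2 = a ∨ p.2 = b := by
            rw [← pmsv2_ne_zero_iff hab (m := p.2), ← heq]
            rw [pmsv2_ne_zero_iff hne]; tauto
          rcases h1 with h1|h1 <;> rcases h2 with h2|h2 <;>
            simp_all [Prod.ext_iff]
        · rintro (rfl | rfl)
          · exact ⟨⟨by simpa using hxD, hab⟩, rfl⟩
          · exact ⟨⟨by rwa [add_comm], Ne.symm hab⟩, add_comm _ _⟩
      rw [this]
      rw [Finset.card_insert_of_notMem (by simp [Prod.ext_iff]; tauto),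
        Finset.card_singleton]
    · intro p hp
      simp only [hs, Finset.mem_coe, Finset.mem_filter, Finset.mem_univ, true_and] at hp ⊢
      exact ⟨hp.1, pm_wt_sv2 hp.2⟩
  omega

lemma pm_count3 (D : Submodule (ZMod 2) (Fin n → ZMod 2)) [DecidablePred (· ∈ D)]
    (hD : ∀ i : Fin n, pmsv i ∉ D) :
    #(univ.filter fun p : Fin n × Fin n × Fin n => pmsv p.1 + pmsv p.2.1 + pmsv p.2.2 ∈ D)
      = 6 * wd D 3 := by
  classical
  set s := univ.filter
    fun p : Fin n × Fin n × Fin n => pmsv p.1 + pmsv p.2.1 + pmsv p.2.2 ∈ D with hs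
  have hdist : ∀ p ∈ s, p.1 ≠ p.2.1 ∧ p.1 ≠ p.2.2 ∧ p.2.1 ≠ p.2.2 := by
    intro p hp
    simp only [hs, Finset.mem_filter, Finset.mem_univ, true_and] at hp
    refine ⟨?_, ?_, ?_⟩
    · rintro h
      rw [← h, pmsv_add_self, zero_add] at hp
      exact hD _ hp
    · rintro h
      have : pmsv p.1 + pmsv p.2.1 + pmsv p.2.2 = pmsv p.2.1 := by
        rw [← h]; abel_nf
        rw [show (2:ℤ) • pmsv p.1 = pmsv p.1 + pmsv p.1 from two_zsmul _, pmsv_add_self]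
        abel
      rw [this] at hp
      exact hD _ hp
    · rintro h
      have : pmsv p.1 + pmsv p.2.1 + pmsv p.2.2 = pmsv p.1 := by
        rw [← h, add_assoc, pmsv_add_self, add_zero]
      rw [this] at hp
      exact hD _ hp
  rw [Finset.card_eq_sum_card_fiberwise
    (f := fun p : Fin n × Fin n × Fin n => pmsv p.1 + pmsv p.2.1 + pmsv p.2.2)
    (t := univ.filter fun x : Fin n → ZMod 2 => x ∈ D ∧ wt x = 3) ?_]
  · rw [Finset.sum_congr rfl (g := fun _ => 6) ?_, Finset.sum_const, pm_wd_eq_card,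
      smul_eq_mul, mul_comm]
    intro x hx
    simp only [Finset.mem_filter, Finset.mem_univ, true_and] at hx
    obtain ⟨hxD, hxw⟩ := hx
    obtain ⟨a, b, c, hab, hac, hbc, rfl⟩ := pm_eq_of_wt_three hxw
    have hba := Ne.symm hab; have hca := Ne.symm hac; have hcb := Ne.symm hbc
    have key : (s.filter fun p : Fin n × Fin n × Fin n =>
          pmsv p.1 + pmsv p.2.1 + pmsv p.2.2 = pmsv a + pmsv b + pmsv c)
        = {(a,b,c),(a,c,b),(b,a,c),(b,c,a),(c,a,b),(c,b,a)} := by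
      ext p
      constructor
      · intro hp
        rw [Finset.mem_filter] at hp
        obtain ⟨hps, heq⟩ := hp
        obtain ⟨h1, h2, h3⟩ := hdist p hps
        have m1 : p.1 = a ∨ p.1 = b ∨ p.1 = c := by
          rw [← pmsv3_ne_zero_iff hab hac hbc (m := p.1), ← heq,
            pmsv3_ne_zero_iff h1 h2 h3]
          tauto
        have m2 : p.2.1 = a ∨ p.2.1 = b ∨ p.2.1 = c := by
          rw [← pmsv3_ne_zero_iff hab hac hbc (m := p.2.1), ← heq,
            pmsv3_ne_zero_iff h1 h2 h3]
          tauto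
        have m3 : p.2.2 = a ∨ p.2.2 = b ∨ p.2.2 = c := by
          rw [← pmsv3_ne_zero_iff hab hac hbc (m := p.2.2), ← heq,
            pmsv3_ne_zero_iff h1 h2 h3]
          tauto
        clear heq hps hdist hxD
        simp only [Finset.mem_insert, Finset.mem_singleton, Prod.ext_iff]
        obtain ⟨u, v, w⟩ := p
        simp only at h1 h2 h3 m1 m2 m3 ⊢
        rcases m1 with rfl|rfl|rfl <;> rcases m2 with rfl|rfl|rfl <;>
          rcases m3 with rfl|rfl|rfl <;> simp_all
      · intro hp
        simp only [Finset.mem_insert, Finset.mem_singleton] at hp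
        have hmem : ∀ q : Fin n × Fin n × Fin n,
            pmsv q.1 + pmsv q.2.1 + pmsv q.2.2 = pmsv a + pmsv b + pmsv c →
            q ∈ s.filter fun p : Fin n × Fin n × Fin n =>
              pmsv p.1 + pmsv p.2.1 + pmsv p.2.2 = pmsv a + pmsv b + pmsv c := by
          intro q hq
          rw [Finset.mem_filter]
          refine ⟨?_, hq⟩
          simp only [hs, Finset.mem_filter, Finset.mem_univ, true_and]
          rw [hq]; exact hxD
        rcases hp with rfl|rfl|rfl|rfl|rfl|rfl <;> exact hmem _ (by abel)
    rw [key]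
    rw [Finset.card_insert_of_notMem
        (by simp [Prod.ext_iff, hab, hac, hbc, hba, hca, hcb]),
      Finset.card_insert_of_notMem (by simp [Prod.ext_iff, hab, hac, hbc, hba, hca, hcb]),
      Finset.card_insert_of_notMem (by simp [Prod.ext_iff, hab, hac, hbc, hba, hca, hcb]),
      Finset.card_insert_of_notMem (by simp [Prod.ext_iff, hab, hac, hbc, hba, hca, hcb]),
      Finset.card_insert_of_notMem (by simp [Prod.ext_iff, hab, hac, hbc, hba, hca, hcb]),
      Finset.card_singleton]
  · intro p hp
    obtain ⟨h1, h2, h3⟩ := hdist p hp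
    simp only [hs, Finset.mem_coe, Finset.mem_filter, Finset.mem_univ, true_and] at hp ⊢
    exact ⟨hp, pm_wt_sv3 h1 h2 h3⟩

variable {C : Submodule (ZMod 2) (Fin n → ZMod 2)}

noncomputable instance : Fintype C := Fintype.ofFinite _

lemma pm_card_C (hk : Module.finrank (ZMod 2) C = 12) : Fintype.card C = 4096 := by
  have := Module.card_eq_pow_finrank (K := ZMod 2) (V := C)
  rw [hk] at this
  simpa using this

lemma pm_mem_dual_iff (v : Fin n → ZMod 2) :
    v ∈ dualCode C ↔ ∀ c ∈ C, ∑ i, v i * c i = 0 := Iff.rfl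

lemma pm_sigma_zero (v : Fin n → ZMod 2) (hv : v ∈ dualCode C) :
    ∑ c : C, (((∑ j, v j * (c : Fin n → ZMod 2) j).val : ℚ)) = 0 := by
  refine Finset.sum_eq_zero fun c _ => ?_
  rw [hv c c.2]; simp

lemma pm_sigma_ne (hk : Module.finrank (ZMod 2) C = 12) (v : Fin n → ZMod 2)
    (hv : v ∉ dualCode C) :
    ∑ c : C, (((∑ j, v j * (c : Fin n → ZMod 2) j).val : ℚ)) = 2048 := by
  rw [pm_mem_dual_iff] at hv
  push_neg at hv
  obtain ⟨c0, hc0, hne⟩ := hv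
  have hone : ∑ j, v j * c0 j = 1 := by
    have h : ∀ a : ZMod 2, a ≠ 0 → a = 1 := by decide
    exact h _ hne
  set f : C → ℚ := fun c => (((∑ j, v j * (c : Fin n → ZMod 2) j).val : ℚ)) with hf
  have key : ∀ c : C, f ((⟨c0, hc0⟩ : C) + c) = 1 - f c := by
    intro c
    have h1 : ∑ j, v j * ((⟨c0, hc0⟩ : C) + c : C).1 j
        = 1 + ∑ j, v j * (c : Fin n → ZMod 2) j := by
      rw [← hone, ← Finset.sum_add_distrib]
      exact Finset.sum_congr rfl fun j _ => by
        show v j * (c0 j + (c : Fin n → ZMod 2) j) = _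
        ring
    have h2' : ∀ a : ZMod 2, ((1+a).val : ℤ) = 1 - (a.val : ℤ) := by decide
    have h2 : ∀ a : ZMod 2, ((1+a).val : ℚ) = 1 - (a.val : ℚ) := by
      intro a; exact_mod_cast h2' a
    simp only [hf, h1, h2]
  have hre : ∑ c : C, f ((⟨c0, hc0⟩ : C) + c) = ∑ c : C, f c :=
    Fintype.sum_equiv (Equiv.addLeft (⟨c0, hc0⟩ : C)) _ _ (fun c => rfl)
  have h4 : 2 * ∑ c : C, f c = 4096 := by
    have h3 := Finset.sum_congr rfl (fun c (_ : c ∈ Finset.univ) => key c)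
    rw [hre] at h3
    have hsum : ∑ c : C, (1 - f c) = 4096 - ∑ c : C, f c := by
      rw [Finset.sum_sub_distrib, Finset.sum_const, Finset.card_univ, pm_card_C hk]
      norm_num
    rw [hsum] at h3; linarith
  linarith

open scoped Classical in
lemma pm_sum_val_dot (hk : Module.finrank (ZMod 2) C = 12) (v : Fin n → ZMod 2) :
    ∑ c : C, (((∑ j, v j * (c : Fin n → ZMod 2) j).val : ℚ))
      = if v ∈ dualCode C then 0 else 2048 := by
  split_ifs with hv
  · exact pm_sigma_zero v hv
  · exact pm_sigma_ne hk v hv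

lemma pm_single_not_mem_dual (hfull : FullLength C) (i : Fin n) :
    pmsv i ∉ dualCode C := by
  intro h
  obtain ⟨c, hc, hci⟩ := hfull i
  have := h c hc
  rw [pm_dot_single] at this
  exact hci this

lemma pm_sum_val_coord (hk : Module.finrank (ZMod 2) C = 12) (hfull : FullLength C)
    (i : Fin n) : ∑ c : C, ((((c : Fin n → ZMod 2) i).val : ℚ)) = 2048 := by
  have h1 : ∀ c : C, (((c : Fin n → ZMod 2) i).val : ℚ)
      = (((∑ j, pmsv i j * (c : Fin n → ZMod 2) j).val : ℚ)) := fun c => by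
    rw [pm_dot_single]
  rw [Finset.sum_congr rfl fun c _ => h1 c]
  exact pm_sigma_ne hk _ (pm_single_not_mem_dual hfull i)

open scoped Classical in
lemma pm_sum_val_two (hk : Module.finrank (ZMod 2) C = 12) (i j : Fin n) :
    ∑ c : C, ((((c : Fin n → ZMod 2) i + (c : Fin n → ZMod 2) j).val : ℚ))
      = if pmsv i + pmsv j ∈ dualCode C then 0 else 2048 := by
  have h1 : ∀ c : C, (((c : Fin n → ZMod 2) i + (c : Fin n → ZMod 2) j).val : ℚ)
      = (((∑ m, (pmsv i + pmsv j) m * (c : Fin n → ZMod 2) m).val : ℚ)) := fun c => by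
    rw [pm_dot_add, pm_dot_single, pm_dot_single]
  rw [Finset.sum_congr rfl fun c _ => h1 c]
  exact pm_sum_val_dot hk _

open scoped Classical in
lemma pm_sum_val_three (hk : Module.finrank (ZMod 2) C = 12) (i j k : Fin n) :
    ∑ c : C, ((((c : Fin n → ZMod 2) i + (c : Fin n → ZMod 2) j
        + (c : Fin n → ZMod 2) k).val : ℚ))
      = if pmsv i + pmsv j + pmsv k ∈ dualCode C then 0 else 2048 := by
  have h1 : ∀ c : C, (((c : Fin n → ZMod 2) i + (c : Fin n → ZMod 2) j
        + (c : Fin n → ZMod 2) k).val : ℚ)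
      = (((∑ m, (pmsv i + pmsv j + pmsv k) m * (c : Fin n → ZMod 2) m).val : ℚ)) := fun c => by
    rw [pm_dot_add, pm_dot_add, pm_dot_single, pm_dot_single, pm_dot_single]
  rw [Finset.sum_congr rfl fun c _ => h1 c]
  exact pm_sum_val_dot hk _

lemma pm_moment0 (hk : Module.finrank (ZMod 2) C = 12) :
    ∑ _c : C, (1 : ℚ) = 4096 := by
  rw [Finset.sum_const, Finset.card_univ, pm_card_C hk]; norm_num

lemma pm_moment1 (hk : Module.finrank (ZMod 2) C = 12) (hfull : FullLength C) :
    ∑ c : C, (wt (c : Fin n → ZMod 2) : ℚ) = 2048 * n := by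
  have e1 : ∑ c : C, (wt (c : Fin n → ZMod 2) : ℚ)
      = ∑ c : C, ∑ i, (((c : Fin n → ZMod 2) i).val : ℚ) :=
    Finset.sum_congr rfl fun c _ => pm_wt_eq_sum _
  rw [e1, Finset.sum_comm]
  have e2 : ∑ i : Fin n, ∑ c : C, (((c : Fin n → ZMod 2) i).val : ℚ)
      = ∑ _i : Fin n, (2048:ℚ) := Finset.sum_congr rfl fun i _ => pm_sum_val_coord hk hfull i
  rw [e2, Finset.sum_const, Finset.card_univ, Fintype.card_fin, nsmul_eq_mul, mul_comm]

lemma pm_moment2 (hk : Module.finrank (ZMod 2) C = 12) (hfull : FullLength C) :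
    ∑ c : C, (wt (c : Fin n → ZMod 2) : ℚ)^2
      = 1024*(n:ℚ)^2 + 1024*n + 2048 * (wd (dualCode C) 2 : ℚ) := by
  classical
  have q2' : ∀ a b : ZMod 2, ((a.val : ℤ) * b.val) * 2
      = (a.val : ℤ) + b.val - ((a+b).val : ℤ) := by decide
  have q2 : ∀ a b : ZMod 2, (a.val : ℚ) * (b.val : ℚ)
      = ((a.val : ℚ) + (b.val : ℚ) - (((a+b).val : ℚ)))/2 := by
    intro a b
    have h := q2' a b
    have h2 : ((a.val : ℚ) * b.val) * 2 = (a.val : ℚ) + b.val - ((a+b).val : ℚ) := by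
      exact_mod_cast h
    linarith
  have expand : ∀ c : C, (wt (c : Fin n → ZMod 2) : ℚ)^2
      = ∑ p : Fin n × Fin n,
          (((c : Fin n → ZMod 2) p.1).val : ℚ) * (((c : Fin n → ZMod 2) p.2).val : ℚ) := by
    intro c
    rw [pm_wt_eq_sum, pow_two, Finset.sum_mul_sum, ← Finset.univ_product_univ,
      Finset.sum_product]
  rw [Finset.sum_congr rfl fun c _ => expand c, Finset.sum_comm]
  have hpair : ∀ p : Fin n × Fin n,
      ∑ c : C, (((c : Fin n → ZMod 2) p.1).val : ℚ) * (((c : Fin n → ZMod 2) p.2).val : ℚ)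
      = if pmsv p.1 + pmsv p.2 ∈ dualCode C then (2048:ℚ) else 1024 := by
    intro p
    rw [Finset.sum_congr rfl fun c _ => q2 _ _, ← Finset.sum_div, Finset.sum_sub_distrib,
      Finset.sum_add_distrib, pm_sum_val_coord hk hfull, pm_sum_val_coord hk hfull,
      pm_sum_val_two hk]
    split_ifs <;> norm_num
  rw [Finset.sum_congr rfl fun p _ => hpair p, Finset.sum_ite, Finset.sum_const,
    Finset.sum_const, nsmul_eq_mul, nsmul_eq_mul]
  have h1 := pm_count2 (dualCode C)
  have h2 := Finset.card_filter_add_card_filter_not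
    (s := (univ : Finset (Fin n × Fin n)))
    (p := fun p : Fin n × Fin n => pmsv p.1 + pmsv p.2 ∈ dualCode C)
  rw [Finset.card_univ, Fintype.card_prod, Fintype.card_fin] at h2
  have h1' : (#(univ.filter fun p : Fin n × Fin n => pmsv p.1 + pmsv p.2 ∈ dualCode C) : ℚ)
      = n + 2 * (wd (dualCode C) 2 : ℚ) := by exact_mod_cast h1
  have h2' : (#(univ.filter fun p : Fin n × Fin n => pmsv p.1 + pmsv p.2 ∈ dualCode C) : ℚ)
      + (#(univ.filter fun p : Fin n × Fin n => ¬ pmsv p.1 + pmsv p.2 ∈ dualCode C) : ℚ)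
      = (n:ℚ) * n := by exact_mod_cast h2
  nlinarith [h1', h2']

lemma pm_moment3 (hk : Module.finrank (ZMod 2) C = 12) (hfull : FullLength C) :
    ∑ c : C, (wt (c : Fin n → ZMod 2) : ℚ)^3
      = 512*(n:ℚ)^3 + 1536*(n:ℚ)^2 + 3072*(n:ℚ)*(wd (dualCode C) 2 : ℚ)
        - 3072 * (wd (dualCode C) 3 : ℚ) := by
  classical
  have q3' : ∀ a b d : ZMod 2, ((a.val : ℤ) * b.val * d.val) * 4
      = (a.val : ℤ) + b.val + d.val - ((a+b).val : ℤ) - ((a+d).val : ℤ) - ((b+d).val : ℤ)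
        + ((a+b+d).val : ℤ) := by decide
  have q3 : ∀ a b d : ZMod 2, (a.val : ℚ) * (b.val : ℚ) * (d.val : ℚ)
      = ((a.val : ℚ) + b.val + d.val - ((a+b).val : ℚ) - ((a+d).val : ℚ) - ((b+d).val : ℚ)
        + ((a+b+d).val : ℚ))/4 := by
    intro a b d
    have h := q3' a b d
    have h2 : ((a.val : ℚ) * b.val * d.val) * 4
        = (a.val : ℚ) + b.val + d.val - ((a+b).val : ℚ) - ((a+d).val : ℚ) - ((b+d).val : ℚ)
          + ((a+b+d).val : ℚ) := by exact_mod_cast h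
    linarith
  -- expand the cube as a sum over ordered triples
  have expand : ∀ c : C, (wt (c : Fin n → ZMod 2) : ℚ)^3
      = ∑ p : Fin n × Fin n × Fin n,
          (((c : Fin n → ZMod 2) p.1).val : ℚ) * (((c : Fin n → ZMod 2) p.2.1).val : ℚ)
            * (((c : Fin n → ZMod 2) p.2.2).val : ℚ) := by
    intro c
    rw [pm_wt_eq_sum]
    set t : Fin n → ℚ := fun i => (((c : Fin n → ZMod 2) i).val : ℚ) with ht
    have h3 : (∑ i, t i)^3 = ∑ i, ∑ j, ∑ k, t i * t j * t k := by
      calc (∑ i, t i)^3 = (∑ i, t i) * (∑ j, t j) * (∑ k, t k) := by ring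
        _ = (∑ i, ∑ j, t i * t j) * (∑ k, t k) := by rw [Finset.sum_mul_sum]
        _ = ∑ i, (∑ j, t i * t j) * (∑ k, t k) := by rw [Finset.sum_mul]
        _ = ∑ i, ∑ j, (t i * t j) * (∑ k, t k) := by
            exact Finset.sum_congr rfl fun i _ => by rw [Finset.sum_mul]
        _ = ∑ i, ∑ j, ∑ k, t i * t j * t k := by
            exact Finset.sum_congr rfl fun i _ => Finset.sum_congr rfl fun j _ => by
              rw [Finset.mul_sum]
    rw [h3]
    rw [Fintype.sum_prod_type]
    exact Finset.sum_congr rfl fun i _ => by rw [Fintype.sum_prod_type]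
  have e1 : ∑ c : C, (wt (c : Fin n → ZMod 2) : ℚ)^3
      = ∑ p : Fin n × Fin n × Fin n, ∑ c : C,
          (((c : Fin n → ZMod 2) p.1).val : ℚ) * (((c : Fin n → ZMod 2) p.2.1).val : ℚ)
            * (((c : Fin n → ZMod 2) p.2.2).val : ℚ) := by
    rw [Finset.sum_congr rfl fun c _ => expand c, Finset.sum_comm]
  rw [e1]
  -- evaluate the inner sum for each triple
  have htriple : ∀ p : Fin n × Fin n × Fin n,
      ∑ c : C, (((c : Fin n → ZMod 2) p.1).val : ℚ) * (((c : Fin n → ZMod 2) p.2.1).val : ℚ)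
          * (((c : Fin n → ZMod 2) p.2.2).val : ℚ)
      = (6144 - (if pmsv p.1 + pmsv p.2.1 ∈ dualCode C then (0:ℚ) else 2048)
          - (if pmsv p.1 + pmsv p.2.2 ∈ dualCode C then (0:ℚ) else 2048)
          - (if pmsv p.2.1 + pmsv p.2.2 ∈ dualCode C then (0:ℚ) else 2048)
          + (if pmsv p.1 + pmsv p.2.1 + pmsv p.2.2 ∈ dualCode C then (0:ℚ) else 2048))/4 := by
    intro p
    rw [Finset.sum_congr rfl fun c _ => q3 _ _ _, ← Finset.sum_div]
    rw [Finset.sum_add_distrib, Finset.sum_sub_distrib, Finset.sum_sub_distrib,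
      Finset.sum_sub_distrib, Finset.sum_add_distrib, Finset.sum_add_distrib]
    rw [pm_sum_val_coord hk hfull, pm_sum_val_coord hk hfull, pm_sum_val_coord hk hfull,
      pm_sum_val_two hk, pm_sum_val_two hk, pm_sum_val_two hk, pm_sum_val_three hk]
    norm_num
  rw [Finset.sum_congr rfl fun p _ => htriple p, ← Finset.sum_div]
  rw [Finset.sum_add_distrib, Finset.sum_sub_distrib, Finset.sum_sub_distrib,
    Finset.sum_sub_distrib]
  -- the pair-marginal sum
  have hSA : ∑ i : Fin n, ∑ j : Fin n,
      (if pmsv i + pmsv j ∈ dualCode C then (0:ℚ) else 2048)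
      = 2048*(n:ℚ)*n - 2048*((n:ℚ) + 2*(wd (dualCode C) 2 : ℚ)) := by
    rw [← Fintype.sum_prod_type
      (f := fun p : Fin n × Fin n => if pmsv p.1 + pmsv p.2 ∈ dualCode C then (0:ℚ) else 2048)]
    rw [Finset.sum_ite, Finset.sum_const, Finset.sum_const, nsmul_eq_mul, nsmul_eq_mul]
    have h1 := pm_count2 (dualCode C)
    have h2 := Finset.card_filter_add_card_filter_not
      (s := (univ : Finset (Fin n × Fin n)))
      (p := fun p : Fin n × Fin n => pmsv p.1 + pmsv p.2 ∈ dualCode C)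
    rw [Finset.card_univ, Fintype.card_prod, Fintype.card_fin] at h2
    have h1' : (#(univ.filter fun p : Fin n × Fin n => pmsv p.1 + pmsv p.2 ∈ dualCode C) : ℚ)
        = n + 2 * (wd (dualCode C) 2 : ℚ) := by exact_mod_cast h1
    have h2' : (#(univ.filter fun p : Fin n × Fin n => pmsv p.1 + pmsv p.2 ∈ dualCode C) : ℚ)
        + (#(univ.filter fun p : Fin n × Fin n => ¬ pmsv p.1 + pmsv p.2 ∈ dualCode C) : ℚ)
        = (n:ℚ) * n := by exact_mod_cast h2
    nlinarith [h1', h2']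
  have hA1 : ∑ p : Fin n × Fin n × Fin n,
      (if pmsv p.1 + pmsv p.2.1 ∈ dualCode C then (0:ℚ) else 2048)
      = (n:ℚ) * (2048*(n:ℚ)*n - 2048*((n:ℚ) + 2*(wd (dualCode C) 2 : ℚ))) := by
    rw [← hSA, Fintype.sum_prod_type, Finset.mul_sum]
    refine Finset.sum_congr rfl fun i _ => ?_
    rw [Fintype.sum_prod_type, Finset.mul_sum]
    refine Finset.sum_congr rfl fun j _ => ?_
    show (∑ _y : Fin n, if pmsv i + pmsv j ∈ dualCode C then (0:ℚ) else 2048) = _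
    rw [Finset.sum_const, Finset.card_univ, Fintype.card_fin, nsmul_eq_mul]
  have hA2 : ∑ p : Fin n × Fin n × Fin n,
      (if pmsv p.1 + pmsv p.2.2 ∈ dualCode C then (0:ℚ) else 2048)
      = (n:ℚ) * (2048*(n:ℚ)*n - 2048*((n:ℚ) + 2*(wd (dualCode C) 2 : ℚ))) := by
    rw [← hSA, Fintype.sum_prod_type, Finset.mul_sum]
    refine Finset.sum_congr rfl fun i _ => ?_
    show (∑ q : Fin n × Fin n, if pmsv i + pmsv q.2 ∈ dualCode C then (0:ℚ) else 2048) = _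
    rw [Fintype.sum_prod_type]
    show (∑ _j : Fin n, ∑ y : Fin n, if pmsv i + pmsv y ∈ dualCode C then (0:ℚ) else 2048) = _
    rw [Finset.sum_const, Finset.card_univ, Fintype.card_fin, nsmul_eq_mul]
  have hA3 : ∑ p : Fin n × Fin n × Fin n,
      (if pmsv p.2.1 + pmsv p.2.2 ∈ dualCode C then (0:ℚ) else 2048)
      = (n:ℚ) * (2048*(n:ℚ)*n - 2048*((n:ℚ) + 2*(wd (dualCode C) 2 : ℚ))) := by
    rw [← hSA, Fintype.sum_prod_type]
    show (∑ _i : Fin n, ∑ q : Fin n × Fin n,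
        if pmsv q.1 + pmsv q.2 ∈ dualCode C then (0:ℚ) else 2048) = _
    rw [Finset.sum_const, Finset.card_univ, Fintype.card_fin, nsmul_eq_mul]
    congr 1
    rw [Fintype.sum_prod_type]
  have hB : ∑ p : Fin n × Fin n × Fin n,
      (if pmsv p.1 + pmsv p.2.1 + pmsv p.2.2 ∈ dualCode C then (0:ℚ) else 2048)
      = 2048*((n:ℚ)*(n*n)) - 2048 * (6*(wd (dualCode C) 3 : ℚ)) := by
    rw [Finset.sum_ite, Finset.sum_const, Finset.sum_const, nsmul_eq_mul, nsmul_eq_mul]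
    have h1 := pm_count3 (dualCode C) (fun i => pm_single_not_mem_dual hfull i)
    have h2 := Finset.card_filter_add_card_filter_not
      (s := (univ : Finset (Fin n × Fin n × Fin n)))
      (p := fun p : Fin n × Fin n × Fin n => pmsv p.1 + pmsv p.2.1 + pmsv p.2.2 ∈ dualCode C)
    rw [Finset.card_univ, Fintype.card_prod, Fintype.card_prod, Fintype.card_fin] at h2
    have h1' : (#(univ.filter fun p : Fin n × Fin n × Fin n =>
        pmsv p.1 + pmsv p.2.1 + pmsv p.2.2 ∈ dualCode C) : ℚ)
        = 6 * (wd (dualCode C) 3 : ℚ) := by exact_mod_cast h1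
    have h2' : (#(univ.filter fun p : Fin n × Fin n × Fin n =>
        pmsv p.1 + pmsv p.2.1 + pmsv p.2.2 ∈ dualCode C) : ℚ)
        + (#(univ.filter fun p : Fin n × Fin n × Fin n =>
            ¬ pmsv p.1 + pmsv p.2.1 + pmsv p.2.2 ∈ dualCode C) : ℚ)
        = (n:ℚ) * ((n:ℚ) * n) := by exact_mod_cast h2
    nlinarith [h1', h2']
  rw [hA1, hA2, hA3, hB, Finset.sum_const, Finset.card_univ, Fintype.card_prod,
    Fintype.card_prod, Fintype.card_fin, nsmul_eq_mul]
  push_cast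
  ring

open scoped Classical in
lemma pm_wd_eq_fiber (w : ℕ) :
    wd C w = #(univ.filter fun c : C => wt (c : Fin n → ZMod 2) = w) := by
  rw [wd]
  have e : {x : Fin n → ZMod 2 // x ∈ C ∧ wt x = w}
      ≃ {c : C // wt (c : Fin n → ZMod 2) = w} :=
    ⟨fun x => ⟨⟨x.1, x.2.1⟩, x.2.2⟩, fun c => ⟨c.1.1, ⟨c.1.2, c.2⟩⟩,
      fun _ => rfl, fun _ => rfl⟩
  rw [Nat.card_congr e, Nat.card_eq_fintype_card]
  convert Fintype.card_subtype (fun c : C => wt (c : Fin n → ZMod 2) = w)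

lemma pm_wd_zero : wd C 0 = 1 := by
  rw [wd, Nat.card_eq_one_iff_unique]
  constructor
  · exact ⟨fun a b => Subtype.ext (by
      rw [hammingNorm_eq_zero.mp a.2.2, hammingNorm_eq_zero.mp b.2.2])⟩
  · exact ⟨⟨0, C.zero_mem, by simp [wt]⟩⟩

lemma pm_sum_weights (W : Finset ℕ) (f : ℕ → ℚ)
    (hmem : ∀ c : C, wt (c : Fin n → ZMod 2) ∈ W) :
    ∑ c : C, f (wt (c : Fin n → ZMod 2)) = ∑ w ∈ W, (wd C w : ℚ) * f w := by
  classical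
  rw [← Finset.sum_fiberwise_of_maps_to (g := fun c : C => wt (c : Fin n → ZMod 2))
    (fun c _ => hmem c) (fun c => f (wt (c : Fin n → ZMod 2)))]
  refine Finset.sum_congr rfl fun w _ => ?_
  have hcg : ∀ c ∈ univ.filter (fun c : C => wt (c : Fin n → ZMod 2) = w),
      f (wt (c : Fin n → ZMod 2)) = f w := fun c hc => by
    rw [(Finset.mem_filter.mp hc).2]
  rw [Finset.sum_congr rfl hcg, Finset.sum_const, nsmul_eq_mul, pm_wd_eq_fiber]

end PM
theorem stmt8 {n : ℕ} (hn : n ≤ 65) (C : Submodule (ZMod 2) (Fin n → ZMod 2))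
    (hk : Module.finrank (ZMod 2) C = 12) (hfull : FullLength C)
    (hdiv : ∀ c ∈ C, 8 ∣ wt c) (hd : ∀ c ∈ C, c ≠ 0 → 24 ≤ wt c) :
    (wd C 40 : ℚ) = 205 / 2 * n ^ 2 - 6808 * n - 1 / 2 * n ^ 3
      + (208 - 3 * n) * wd (dualCode C) 2 + 3 * wd (dualCode C) 3
      + 6 * wd C 56 + 20 * wd C 64 + 147420 := by
  classical
  have hmem : ∀ c : C, wt (c : Fin n → ZMod 2) ∈ ({0,24,32,40,48,56,64} : Finset ℕ) := by
    intro c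
    have h65 : wt (c : Fin n → ZMod 2) ≤ 65 := by
      calc wt (c : Fin n → ZMod 2) ≤ Fintype.card (Fin n) := hammingNorm_le_card_fintype
        _ = n := Fintype.card_fin n
        _ ≤ 65 := hn
    have h8 := hdiv (c : Fin n → ZMod 2) c.2
    by_cases hc0 : (c : Fin n → ZMod 2) = 0
    · have : wt (c : Fin n → ZMod 2) = 0 := by rw [hc0]; simp [wt]
      simp [this]
    · have h24 := hd (c : Fin n → ZMod 2) c.2 hc0
      simp only [Finset.mem_insert, Finset.mem_singleton]
      omega
  have E0 := pm_sum_weights ({0,24,32,40,48,56,64} : Finset ℕ) (fun _ => (1:ℚ)) hmem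
  rw [pm_moment0 hk] at E0
  have E1 := pm_sum_weights ({0,24,32,40,48,56,64} : Finset ℕ) (fun w => (w:ℚ)) hmem
  have E1' : ∑ c : C, (wt (c : Fin n → ZMod 2) : ℚ) = 2048 * n := pm_moment1 hk hfull
  rw [E1'] at E1
  have E2 := pm_sum_weights ({0,24,32,40,48,56,64} : Finset ℕ) (fun w => (w:ℚ)^2) hmem
  have E2' : ∑ c : C, (wt (c : Fin n → ZMod 2) : ℚ)^2
      = 1024*(n:ℚ)^2 + 1024*n + 2048 * (wd (dualCode C) 2 : ℚ) := pm_moment2 hk hfull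
  rw [E2'] at E2
  have E3 := pm_sum_weights ({0,24,32,40,48,56,64} : Finset ℕ) (fun w => (w:ℚ)^3) hmem
  have E3' : ∑ c : C, (wt (c : Fin n → ZMod 2) : ℚ)^3
      = 512*(n:ℚ)^3 + 1536*(n:ℚ)^2 + 3072*(n:ℚ)*(wd (dualCode C) 2 : ℚ)
        - 3072 * (wd (dualCode C) 3 : ℚ) := pm_moment3 hk hfull
  rw [E3'] at E3
  rw [Finset.sum_insert (by norm_num), Finset.sum_insert (by norm_num),
    Finset.sum_insert (by norm_num), Finset.sum_insert (by norm_num),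
    Finset.sum_insert (by norm_num), Finset.sum_insert (by norm_num),
    Finset.sum_singleton, pm_wd_zero] at E0 E1 E2 E3
  norm_num at E0 E1 E2 E3
  linear_combination (1/1024 : ℚ) * E3 + (-13/128 : ℚ) * E2 + (27/8 : ℚ) * E1 + (-36 : ℚ) * E0
end

section
/- Let C be an 8-divisible binary [n,12] code of full length with minimum distance ≥ 24 and n ≤ 65. Then C contains at least one codeword of weight 40. (Proof outline: from the power-moment identities, a_40 ≥ (205/2)n² − 6808n − (1/2)n³ + 147420 and a_40 + a_48 ≥ 71n² − (14504/3)n − (1/3)n³ + 106470; for 54 ≤ n ≤ 60 the second bound is negative, a contradiction, and otherwise the first bound forces a_40 ≥ 1.) -/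
open Finset

/-! ### Auxiliary material for the proof -/

/-- The quadratic character `ZMod 2 → ℤ`. -/
def stmt9chi (a : ZMod 2) : ℤ := 1 - 2 * (a.val : ℤ)

lemma stmt9chi_zero : stmt9chi 0 = 1 := by decide

lemma stmt9chi_add : ∀ a b : ZMod 2, stmt9chi (a + b) = stmt9chi a * stmt9chi b := by decide

lemma stmt9chi_sum {ι : Type*} (s : Finset ι) (g : ι → ZMod 2) :
    stmt9chi (∑ j ∈ s, g j) = ∏ j ∈ s, stmt9chi (g j) := by
  induction s using Finset.cons_induction with
  | empty => simpa using stmt9chi_zero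
  | cons a s ha ih => rw [Finset.sum_cons, Finset.prod_cons, stmt9chi_add, ih]

lemma stmt9_sum_pow_tuple {ι : Type*} [Fintype ι] (f : ι → ℤ) (m : ℕ) :
    (∑ i, f i) ^ m = ∑ t : Fin m → ι, ∏ j, f (t j) := by
  induction m with
  | zero => simp
  | succ m ih =>
    have e1 : ∑ t : Fin (m + 1) → ι, ∏ j, f (t j)
        = ∑ p : ι × (Fin m → ι), f p.1 * ∏ j, f (p.2 j) := by
      rw [← Equiv.sum_comp (Fin.consEquiv (fun _ : Fin (m + 1) => ι))
        (fun t => ∏ j, f (t j))]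
      refine Finset.sum_congr rfl fun p _ => ?_
      rw [Fin.prod_univ_succ]
      simp [Fin.consEquiv]
    rw [pow_succ', ih, e1, Fintype.sum_prod_type, Finset.sum_mul]
    exact Finset.sum_congr rfl fun a _ => Finset.mul_sum _ _ _

set_option maxHeartbeats 8000000 in
/-- The purely arithmetic core: the power-moment constraints force `1 ≤ a40`. -/
lemma stmt9_arith (n : ℕ) (h24 : 24 ≤ n) (hn : n ≤ 65)
    (a24 a32 a40 a48 a56 a64 p N3 N4 N5 : ℤ)
    (ha24 : 0 ≤ a24) (ha32 : 0 ≤ a32) (ha40 : 0 ≤ a40) (ha48 : 0 ≤ a48)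
    (ha56 : 0 ≤ a56) (ha64 : 0 ≤ a64)
    (h56 : n < 56 → a56 = 0) (h64 : n < 64 → a64 = 0)
    (E0 : 1 + a24 + a32 + a40 + a48 + a56 + a64 = 4096)
    (E1 : (n : ℤ) + ((n : ℤ) - 48) * a24 + ((n : ℤ) - 64) * a32 + ((n : ℤ) - 80) * a40
        + ((n : ℤ) - 96) * a48 + ((n : ℤ) - 112) * a56 + ((n : ℤ) - 128) * a64 = 0)
    (E2 : (n : ℤ) ^ 2 + ((n : ℤ) - 48) ^ 2 * a24 + ((n : ℤ) - 64) ^ 2 * a32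
        + ((n : ℤ) - 80) ^ 2 * a40 + ((n : ℤ) - 96) ^ 2 * a48 + ((n : ℤ) - 112) ^ 2 * a56
        + ((n : ℤ) - 128) ^ 2 * a64 = 4096 * (n : ℤ) + 8192 * p)
    (E3 : (n : ℤ) ^ 3 + ((n : ℤ) - 48) ^ 3 * a24 + ((n : ℤ) - 64) ^ 3 * a32
        + ((n : ℤ) - 80) ^ 3 * a40 + ((n : ℤ) - 96) ^ 3 * a48 + ((n : ℤ) - 112) ^ 3 * a56
        + ((n : ℤ) - 128) ^ 3 * a64 = 4096 * N3)
    (E4 : (n : ℤ) ^ 4 + ((n : ℤ) - 48) ^ 4 * a24 + ((n : ℤ) - 64) ^ 4 * a32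
        + ((n : ℤ) - 80) ^ 4 * a40 + ((n : ℤ) - 96) ^ 4 * a48 + ((n : ℤ) - 112) ^ 4 * a56
        + ((n : ℤ) - 128) ^ 4 * a64 = 4096 * N4)
    (E5 : (n : ℤ) ^ 5 + ((n : ℤ) - 48) ^ 5 * a24 + ((n : ℤ) - 64) ^ 5 * a32
        + ((n : ℤ) - 80) ^ 5 * a40 + ((n : ℤ) - 96) ^ 5 * a48 + ((n : ℤ) - 112) ^ 5 * a56
        + ((n : ℤ) - 128) ^ 5 * a64 = 4096 * N5)
    (hp : 0 ≤ p) (hN3 : 0 ≤ N3) (hN4 : (n : ℤ) * (n : ℤ) ≤ N4) (hN5 : 0 ≤ N5) :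
    1 ≤ a40 := by
  rcases Nat.lt_or_ge n 56 with hlt | hge
  · have hb56 := h56 hlt
    have hb64 := h64 (by omega)
    interval_cases n <;> norm_num at E1 E2 E3 E4 E5 hN4 <;> omega
  · rcases Nat.lt_or_ge n 64 with hlt2 | hge2
    · have hb64 := h64 hlt2
      interval_cases n <;> norm_num at E1 E2 E3 E4 E5 hN4 <;> omega
    · interval_cases n <;> norm_num at E1 E2 E3 E4 E5 hN4 <;> omega


lemma stmt9_pair_ext {α : Type*} (t₁ t₂ : Fin 2 → α) (h0 : t₁ 0 = t₂ 0) (h1 : t₁ 1 = t₂ 1) :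
    t₁ = t₂ :=
  funext fun j => by fin_cases j <;> assumption

lemma stmt9_swap_invol {α : Type*} (t : Fin 2 → α) : ![(![t 1, t 0]) 1, (![t 1, t 0]) 0] = t := by
  funext j
  fin_cases j <;> simp

set_option maxHeartbeats 2000000 in
theorem stmt9 {n : ℕ} (hn : n ≤ 65) (C : Submodule (ZMod 2) (Fin n → ZMod 2))
    (hk : Module.finrank (ZMod 2) C = 12) (hfull : FullLength C)
    (hdiv : ∀ c ∈ C, 8 ∣ wt c) (hd : ∀ c ∈ C, c ≠ 0 → 24 ≤ wt c) :
    1 ≤ wd C 40 := by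
  classical
  -- the code as a finset
  set Cs : Finset (Fin n → ZMod 2) := univ.filter (· ∈ C) with hCs
  have hmem : ∀ x : Fin n → ZMod 2, x ∈ Cs ↔ x ∈ C := fun x => by simp [hCs]
  have hcard : Cs.card = 4096 := by
    have h1 : Fintype.card C = 4096 := by
      rw [Module.card_eq_pow_finrank (K := ZMod 2) (V := C), hk, ZMod.card]
      norm_num
    rw [← h1]
    exact (Fintype.card_subtype (· ∈ C)).symm
  -- n is at least 24
  have hwle : ∀ c : Fin n → ZMod 2, wt c ≤ n := fun c =>
    le_trans hammingNorm_le_card_fintype (by simp)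
  have hex : ∃ c ∈ C, c ≠ (0 : Fin n → ZMod 2) := by
    by_contra h
    push_neg at h
    have hbot : C = ⊥ := (Submodule.eq_bot_iff C).mpr h
    rw [hbot, finrank_bot] at hk
    exact absurd hk (by norm_num)
  obtain ⟨c₀, hc₀, hc₀ne⟩ := hex
  have h24 : 24 ≤ n := le_trans (hd c₀ hc₀ hc₀ne) (hwle c₀)
  -- character sums over the code
  have orth : ∀ (m : ℕ) (t : Fin m → Fin n),
      ∑ c ∈ Cs, stmt9chi (∑ j, c (t j))
        = if (∀ c ∈ Cs, ∑ j, c (t j) = 0) then 4096 else 0 := by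
    intro m t
    by_cases h : ∀ c ∈ Cs, ∑ j, c (t j) = 0
    · rw [if_pos h]
      have he : ∀ c ∈ Cs, stmt9chi (∑ j, c (t j)) = 1 := fun c hc => by
        rw [h c hc, stmt9chi_zero]
      rw [Finset.sum_congr rfl he, Finset.sum_const, hcard]
      norm_num
    · rw [if_neg h]
      push_neg at h
      obtain ⟨c₁, hc₁, hval⟩ := h
      have hone : ∑ j, c₁ (t j) = 1 := by
        have h2 : ∀ a : ZMod 2, a ≠ 0 → a = 1 := by decide
        exact h2 _ hval
      have haddself : ∀ x : Fin n → ZMod 2, x + c₁ + c₁ = x := by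
        intro x
        funext i
        have h2 : ∀ a b : ZMod 2, a + b + b = a := by decide
        simp [h2]
      refine Finset.sum_involution (fun c _ => c + c₁) ?_ ?_ ?_ ?_
      · intro c hc
        have hL : ∑ j, (c + c₁) (t j) = (∑ j, c (t j)) + 1 := by
          rw [← hone, ← Finset.sum_add_distrib]
          rfl
        rw [hL, stmt9chi_add]
        have h1 : stmt9chi 1 = -1 := by decide
        rw [h1]
        ring
      · intro c hc _
        intro hfalse
        apply hval
        have : c₁ = 0 := by
          have := congrArg (fun y => y + c₁) hfalse
          simpa [haddself] using hfalse
        rw [this]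
        simp
      · intro c hc
        rw [hmem] at hc ⊢
        exact C.add_mem hc ((hmem c₁).mp hc₁)
      · intro c hc
        exact haddself c
  -- the tuple-counting sets
  let T : ∀ m : ℕ, Finset (Fin m → Fin n) := fun m =>
    univ.filter (fun t => ∀ c ∈ Cs, ∑ j, c (t j) = 0)
  -- the power moments
  have moment : ∀ m : ℕ,
      ∑ c ∈ Cs, ((n : ℤ) - 2 * (wt c : ℤ)) ^ m = 4096 * ((T m).card : ℤ) := by
    intro m
    have hs : ∀ c : Fin n → ZMod 2, (n : ℤ) - 2 * (wt c : ℤ) = ∑ i, stmt9chi (c i) := by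
      intro c
      have hwt : (wt c : ℤ) = ∑ i, (if c i ≠ 0 then (1 : ℤ) else 0) := by
        rw [Finset.sum_ite, Finset.sum_const, Finset.sum_const]
        simp [wt, hammingNorm]
      have hv : ∀ a : ZMod 2, stmt9chi a = 1 - 2 * (if a ≠ 0 then (1 : ℤ) else 0) := by decide
      rw [hwt, Finset.mul_sum]
      rw [Finset.sum_congr rfl (fun i _ => hv (c i))]
      rw [Finset.sum_sub_distrib, Finset.sum_const]
      simp [mul_comm]
    calc ∑ c ∈ Cs, ((n : ℤ) - 2 * (wt c : ℤ)) ^ m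
        = ∑ c ∈ Cs, (∑ i, stmt9chi (c i)) ^ m :=
          Finset.sum_congr rfl fun c _ => by rw [hs c]
      _ = ∑ c ∈ Cs, ∑ t : Fin m → Fin n, ∏ j, stmt9chi (c (t j)) :=
          Finset.sum_congr rfl fun c _ => stmt9_sum_pow_tuple _ m
      _ = ∑ t : Fin m → Fin n, ∑ c ∈ Cs, ∏ j, stmt9chi (c (t j)) := Finset.sum_comm
      _ = ∑ t : Fin m → Fin n, ∑ c ∈ Cs, stmt9chi (∑ j, c (t j)) := by
          refine Finset.sum_congr rfl fun t _ => Finset.sum_congr rfl fun c _ => ?_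
          rw [stmt9chi_sum]
      _ = ∑ t : Fin m → Fin n, (if (∀ c ∈ Cs, ∑ j, c (t j) = 0) then (4096 : ℤ) else 0) :=
          Finset.sum_congr rfl fun t _ => orth m t
      _ = ∑ t ∈ T m, (4096 : ℤ) := (Finset.sum_filter _ _).symm
      _ = 4096 * ((T m).card : ℤ) := by
          rw [Finset.sum_const, nsmul_eq_mul, mul_comm]
  -- weight distribution (as finset cardinalities)
  let A : ℕ → ℕ := fun w => (Cs.filter (fun c => wt c = w)).card
  have hW : ∀ c ∈ Cs, wt c ∈ ({0, 24, 32, 40, 48, 56, 64} : Finset ℕ) := by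
    intro c hc
    rw [hmem] at hc
    have hdvd := hdiv c hc
    have hle : wt c ≤ 65 := le_trans (hwle c) hn
    have h03 : c = 0 ∨ 24 ≤ wt c := by
      rcases eq_or_ne c 0 with h | h
      · exact Or.inl h
      · exact Or.inr (hd c hc h)
    have h0 : wt c = 0 ∨ 24 ≤ wt c := by
      rcases h03 with h | h
      · left; rw [h]; simp [wt]
      · exact Or.inr h
    simp only [Finset.mem_insert, Finset.mem_singleton]
    omega
  have fib : ∀ m : ℕ,
      ∑ c ∈ Cs, ((n : ℤ) - 2 * (wt c : ℤ)) ^ m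
        = ∑ w ∈ ({0, 24, 32, 40, 48, 56, 64} : Finset ℕ), (A w : ℤ) * ((n : ℤ) - 2 * w) ^ m := by
    intro m
    rw [← Finset.sum_fiberwise_of_maps_to' hW (fun w => ((n : ℤ) - 2 * (w : ℤ)) ^ m)]
    exact Finset.sum_congr rfl fun w _ => by
      rw [Finset.sum_const, nsmul_eq_mul]
  have hsum7 : ∀ g : ℕ → ℤ, ∑ w ∈ ({0, 24, 32, 40, 48, 56, 64} : Finset ℕ), g w
      = g 0 + g 24 + g 32 + g 40 + g 48 + g 56 + g 64 := by
    intro g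
    rw [Finset.sum_insert (by decide), Finset.sum_insert (by decide),
      Finset.sum_insert (by decide), Finset.sum_insert (by decide),
      Finset.sum_insert (by decide), Finset.sum_insert (by decide),
      Finset.sum_singleton]
    ring
  -- special values of A
  have hA0 : A 0 = 1 := by
    have : Cs.filter (fun c => wt c = 0) = {0} := by
      ext x
      simp only [Finset.mem_filter, Finset.mem_singleton, hmem x]
      constructor
      · rintro ⟨-, h⟩
        exact hammingNorm_eq_zero.mp h
      · rintro rfl
        exact ⟨C.zero_mem, by simp [wt]⟩
    show (Cs.filter (fun c => wt c = 0)).card = 1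
    rw [this, Finset.card_singleton]
  have hAbig : ∀ w : ℕ, n < w → A w = 0 := by
    intro w hw
    show (Cs.filter (fun c => wt c = w)).card = 0
    rw [Finset.card_eq_zero, Finset.filter_eq_empty_iff]
    intro c _ hwt
    have := hwle c
    omega
  -- relation to wd
  have hwd : wd C 40 = A 40 := by
    rw [wd, Nat.card_eq_fintype_card, Fintype.card_subtype]
    congr 1
    ext c
    simp [hmem, and_comm]
  -- T 1 is empty (full length)
  have hT1 : (T 1).card = 0 := by
    rw [Finset.card_eq_zero, Finset.filter_eq_empty_iff]
    intro t _
    intro hall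
    obtain ⟨c, hcC, hci⟩ := hfull (t 0)
    apply hci
    have := hall c ((hmem c).mpr hcC)
    rw [Fin.sum_univ_one] at this
    exact this
  -- T 2 has cardinality n + 2p
  have hT2 : ∃ p : ℕ, (T 2).card = n + 2 * p := by
    have hdiag : ((T 2).filter (fun t => t 0 = t 1)).card = n := by
      have hb : ((T 2).filter (fun t => t 0 = t 1)).card = (univ : Finset (Fin n)).card := by
        apply Finset.card_bij (fun t _ => t 0)
        · intro t ht
          exact Finset.mem_univ _
        · intro t₁ h₁ t₂ h₂ heq
          have e1 : t₁ 0 = t₁ 1 := (Finset.mem_filter.mp h₁).2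
          have e2 : t₂ 0 = t₂ 1 := (Finset.mem_filter.mp h₂).2
          exact stmt9_pair_ext _ _ heq (by rw [← e1, ← e2]; exact heq)
        · intro i _
          refine ⟨fun _ => i, ?_, rfl⟩
          rw [Finset.mem_filter]
          refine ⟨?_, rfl⟩
          simp only [T, Finset.mem_filter, Finset.mem_univ, true_and]
          intro c _
          rw [Fin.sum_univ_two]
          have h2 : ∀ a : ZMod 2, a + a = 0 := by decide
          exact h2 _
      simpa using hb
    have hsplitO : ((T 2).filter (fun t => ¬ t 0 = t 1)).card
        = (((T 2).filter (fun t => ¬ t 0 = t 1)).filter (fun t => t 0 < t 1)).card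
          + (((T 2).filter (fun t => ¬ t 0 = t 1)).filter (fun t => ¬ t 0 < t 1)).card :=
      (Finset.card_filter_add_card_filter_not _).symm
    have hmemswap : ∀ t ∈ T 2, (![t 1, t 0] : Fin 2 → Fin n) ∈ T 2 := by
      intro t ht
      simp only [T, Finset.mem_filter, Finset.mem_univ, true_and] at ht ⊢
      intro c hc
      have := ht c hc
      rw [Fin.sum_univ_two] at this ⊢
      simpa [add_comm] using this
    have heqcard : (((T 2).filter (fun t => ¬ t 0 = t 1)).filter (fun t => ¬ t 0 < t 1)).card
        = (((T 2).filter (fun t => ¬ t 0 = t 1)).filter (fun t => t 0 < t 1)).card := by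
      apply Finset.card_nbij' (fun t => ![t 1, t 0]) (fun t => ![t 1, t 0])
      · intro t ht
        simp only [Finset.mem_coe, Finset.mem_filter] at ht ⊢
        obtain ⟨⟨h1, h2⟩, h3⟩ := ht
        refine ⟨⟨hmemswap t h1, ?_⟩, ?_⟩
        · simp only [Matrix.cons_val_zero, Matrix.cons_val_one, Matrix.head_cons]
          exact fun h => h2 h.symm
        · simp only [Matrix.cons_val_zero, Matrix.cons_val_one, Matrix.head_cons]
          rcases lt_trichotomy (t 0) (t 1) with h | h | h
          · exact absurd h h3
          · exact absurd h h2
          · exact h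
      · intro t ht
        simp only [Finset.mem_coe, Finset.mem_filter] at ht ⊢
        obtain ⟨⟨h1, h2⟩, h3⟩ := ht
        refine ⟨⟨hmemswap t h1, ?_⟩, ?_⟩
        · simp only [Matrix.cons_val_zero, Matrix.cons_val_one, Matrix.head_cons]
          exact fun h => h2 h.symm
        · simp only [Matrix.cons_val_zero, Matrix.cons_val_one, Matrix.head_cons]
          exact fun h => absurd (h.trans h3) (lt_irrefl _)
      · intro t ht
        exact stmt9_swap_invol t
      · intro t ht
        exact stmt9_swap_invol t
    refine ⟨(((T 2).filter (fun t => ¬ t 0 = t 1)).filter (fun t => t 0 < t 1)).card, ?_⟩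
    have htot : (T 2).card = ((T 2).filter (fun t => t 0 = t 1)).card
        + ((T 2).filter (fun t => ¬ t 0 = t 1)).card :=
      (Finset.card_filter_add_card_filter_not _).symm
    rw [htot, hdiag, hsplitO, heqcard]
    ring
  -- T 4 is large
  have hT4 : n * n ≤ (T 4).card := by
    have : n * n = (univ : Finset (Fin n × Fin n)).card := by
      simp [Finset.card_univ]
    rw [this]
    apply Finset.card_le_card_of_injOn (fun q => ![q.1, q.1, q.2, q.2])
    · intro q _
      simp only [T, Finset.mem_coe, Finset.mem_filter, Finset.mem_univ, true_and]
      intro c _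
      rw [Fin.sum_univ_four]
      simp only [Matrix.cons_val_zero, Matrix.cons_val_one, Matrix.head_cons,
        Matrix.cons_val_two, Matrix.tail_cons, Matrix.cons_val_three]
      have h4 : ∀ a b : ZMod 2, a + a + b + b = 0 := by decide
      exact h4 _ _
    · intro q _ q' _ heq
      have h0 := congrFun heq 0
      have h2 := congrFun heq 2
      simp only [Matrix.cons_val_zero, Matrix.cons_val_two, Matrix.tail_cons,
        Matrix.head_cons] at h0 h2
      exact Prod.ext h0 h2
  obtain ⟨p, hp⟩ := hT2
  -- assemble the moment identities
  have hE : ∀ m : ℕ, (1 : ℤ) * ((n : ℤ) - 0) ^ m + (A 24 : ℤ) * ((n : ℤ) - 48) ^ m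
      + (A 32 : ℤ) * ((n : ℤ) - 64) ^ m + (A 40 : ℤ) * ((n : ℤ) - 80) ^ m
      + (A 48 : ℤ) * ((n : ℤ) - 96) ^ m + (A 56 : ℤ) * ((n : ℤ) - 112) ^ m
      + (A 64 : ℤ) * ((n : ℤ) - 128) ^ m = 4096 * ((T m).card : ℤ) := by
    intro m
    have h1 := (fib m).symm.trans (moment m)
    rw [hsum7] at h1
    rw [← h1, hA0]
    norm_num
  have hE0 : (1 : ℤ) + (A 24 : ℤ) + (A 32 : ℤ) + (A 40 : ℤ) + (A 48 : ℤ) + (A 56 : ℤ)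
      + (A 64 : ℤ) = 4096 := by
    have h1 := (fib 0).symm
    rw [hsum7] at h1
    simp only [pow_zero, mul_one] at h1
    rw [hA0] at h1
    push_cast at h1
    rw [h1]
    simp [hcard]
  have hE1 := hE 1
  have hE2 := hE 2
  have hE3 := hE 3
  have hE4 := hE 4
  have hE5 := hE 5
  rw [hT1] at hE1
  rw [hp] at hE2
  -- final arithmetic
  rw [hwd]
  suffices hZ : (1 : ℤ) ≤ (A 40 : ℤ) by exact_mod_cast hZ
  refine stmt9_arith n h24 hn (A 24 : ℤ) (A 32 : ℤ) (A 40 : ℤ) (A 48 : ℤ) (A 56 : ℤ)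
    (A 64 : ℤ) (p : ℤ) ((T 3).card : ℤ) ((T 4).card : ℤ) ((T 5).card : ℤ)
    (Int.natCast_nonneg _) (Int.natCast_nonneg _) (Int.natCast_nonneg _)
    (Int.natCast_nonneg _) (Int.natCast_nonneg _) (Int.natCast_nonneg _)
    ?_ ?_ hE0 ?_ ?_ ?_ ?_ ?_ (Int.natCast_nonneg _) (Int.natCast_nonneg _) ?_
    (Int.natCast_nonneg _)
  · intro h
    have := hAbig 56 h
    exact_mod_cast this
  · intro h
    have := hAbig 64 h
    exact_mod_cast this
  · -- E1
    have := hE1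
    push_cast at this ⊢
    linarith
  · -- E2
    have := hE2
    push_cast at this ⊢
    linarith
  · have := hE3
    push_cast at this ⊢
    linarith
  · have := hE4
    push_cast at this ⊢
    linarith
  · have := hE5
    push_cast at this ⊢
    linarith
  · -- N4 bound
    exact_mod_cast hT4
end

section
/- Let C be a binary linear code of length 56 whose nonzero codeword weights all lie in {24, 32, 56}. Then dim C ≤ 9. -/
open Finset

namespace Stmt15Aux

abbrev V := Fin 10 → ZMod 2

def eps : ZMod 2 → ℤ := fun a => if a = 0 then 1 else -1

lemma eps_add : ∀ a b : ZMod 2, eps (a + b) = eps a * eps b := by decide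

lemma eps_zero : eps 0 = 1 := rfl

def dp {k : ℕ} (v y : Fin k → ZMod 2) : ZMod 2 := ∑ j, v j * y j

lemma dp_add {k : ℕ} (v y z : Fin k → ZMod 2) : dp v (y + z) = dp v y + dp v z := by
  simp [dp, mul_add, Finset.sum_add_distrib]

lemma dp_zero {k : ℕ} (v : Fin k → ZMod 2) : dp v 0 = 0 := by simp [dp]

lemma zero_dp {k : ℕ} (y : Fin k → ZMod 2) : dp 0 y = 0 := by simp [dp]

lemma add_dp {k : ℕ} (u v y : Fin k → ZMod 2) : dp (u + v) y = dp u y + dp v y := by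
  simp [dp, add_mul, Finset.sum_add_distrib]

lemma single_dp {k : ℕ} (t : Fin k) (y : Fin k → ZMod 2) : dp (Pi.single t 1) y = y t := by
  rw [dp, Finset.sum_eq_single t]
  · simp
  · intro b _ hb; simp [Pi.single_apply, hb]
  · simp

lemma z2_ne_zero {a : ZMod 2} (h : a ≠ 0) : a = 1 := by
  have : ∀ a : ZMod 2, a ≠ 0 → a = 1 := by decide
  exact this a h

lemma fun_add_eq_zero_iff {k : ℕ} (y z : Fin k → ZMod 2) : y + z = 0 ↔ z = y := by
  constructor
  · intro h; funext i
    have h2 := congrFun h i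
    have : ∀ a b : ZMod 2, a + b = 0 → b = a := by decide
    exact this _ _ h2
  · rintro rfl; funext i
    have : ∀ a : ZMod 2, a + a = 0 := by decide
    exact this _

lemma card_V : Fintype.card V = 1024 := by
  simp [Fintype.card_fun]

lemma chr (y : V) : ∑ v : V, eps (dp v y) = if y = 0 then 1024 else 0 := by
  by_cases h : y = 0
  · subst h
    simp only [dp_zero, eps_zero, if_pos rfl, Finset.sum_const, Finset.card_univ, card_V]
    norm_num
  · rw [if_neg h]
    obtain ⟨t, ht⟩ : ∃ t, y t ≠ 0 := by
      by_contra hc; push_neg at hc; exact h (funext hc)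
    have hy1 : y t = 1 := z2_ne_zero ht
    have key : ∀ v : V, eps (dp (v + Pi.single t 1) y) = - eps (dp v y) := by
      intro v
      rw [add_dp, single_dp, hy1]
      have : ∀ a : ZMod 2, eps (a + 1) = - eps a := by decide
      exact this _
    have h2 : ∑ v : V, eps (dp (v + Pi.single t 1) y) = ∑ v : V, eps (dp v y) :=
      Fintype.sum_equiv (Equiv.addRight (Pi.single t 1)) _ _ (fun v => rfl)
    have h3 : ∑ v : V, eps (dp v y) = - ∑ v : V, eps (dp v y) := by
      calc ∑ v : V, eps (dp v y) = ∑ v : V, eps (dp (v + Pi.single t 1) y) := h2.symm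
        _ = ∑ v : V, - eps (dp v y) := Finset.sum_congr rfl (fun v _ => key v)
        _ = - ∑ v : V, eps (dp v y) := by rw [Finset.sum_neg_distrib]
    linarith

lemma sum_eps (c : Fin 56 → ZMod 2) : ∑ i, eps (c i) = 56 - 2 * (hammingNorm c : ℤ) := by
  classical
  rw [← Finset.sum_filter_add_sum_filter_not Finset.univ (fun i => c i = 0)]
  have h1 : ∑ i ∈ Finset.univ.filter (fun i => c i = 0), eps (c i)
      = (Finset.univ.filter (fun i => c i = 0)).card := by
    calc ∑ i ∈ Finset.univ.filter (fun i => c i = 0), eps (c i)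
        = ∑ i ∈ Finset.univ.filter (fun i => c i = 0), 1 :=
          Finset.sum_congr rfl (fun i hi => by rw [(Finset.mem_filter.mp hi).2, eps_zero])
      _ = _ := by simp
  have h2 : ∑ i ∈ Finset.univ.filter (fun i => ¬ c i = 0), eps (c i)
      = -((Finset.univ.filter (fun i => ¬ c i = 0)).card : ℤ) := by
    calc ∑ i ∈ Finset.univ.filter (fun i => ¬ c i = 0), eps (c i)
        = ∑ i ∈ Finset.univ.filter (fun i => ¬ c i = 0), (-1 : ℤ) :=
          Finset.sum_congr rfl (fun i hi => by
            have := (Finset.mem_filter.mp hi).2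
            simp [eps, this])
      _ = _ := by simp
  rw [h1, h2]
  have hnorm : hammingNorm c = (Finset.univ.filter (fun i => ¬ c i = 0)).card := rfl
  have hcard := Finset.card_filter_add_card_filter_not (s := (Finset.univ : Finset (Fin 56)))
    (p := fun i => c i = 0)
  simp only [Finset.card_univ, Fintype.card_fin] at hcard
  rw [hnorm]
  omega

set_option maxRecDepth 4000 in
lemma even_Q (B : Fin 56 → V) (x : V) (hx : x ≠ 0) :
    Even (∑ i : Fin 56, ∑ i' : Fin 56, if B i + B i' = x then (1:ℤ) else 0) := by
  classical
  set f : Fin 56 × Fin 56 → ℤ := fun p => if B p.1 + B p.2 = x then (1:ℤ) else 0 with hf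
  have hprod : (∑ i : Fin 56, ∑ i' : Fin 56, if B i + B i' = x then (1:ℤ) else 0)
      = ∑ p ∈ (Finset.univ ×ˢ Finset.univ : Finset (Fin 56 × Fin 56)), f p :=
    (Finset.sum_product Finset.univ Finset.univ f).symm
  have hsplit := Finset.sum_filter_add_sum_filter_not
    (Finset.univ ×ˢ Finset.univ : Finset (Fin 56 × Fin 56))
    (fun p : Fin 56 × Fin 56 => p.1 < p.2) f
  have hsplit2 := Finset.sum_filter_add_sum_filter_not
    (((Finset.univ ×ˢ Finset.univ : Finset (Fin 56 × Fin 56))).filter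
      (fun p : Fin 56 × Fin 56 => ¬ p.1 < p.2))
    (fun p : Fin 56 × Fin 56 => p.2 < p.1) f
  rw [Finset.filter_filter, Finset.filter_filter] at hsplit2
  have hdiag : ∑ p ∈ (Finset.univ ×ˢ Finset.univ : Finset (Fin 56 × Fin 56)).filter
      (fun p : Fin 56 × Fin 56 => ¬ p.1 < p.2 ∧ ¬ p.2 < p.1), f p = 0 := by
    apply Finset.sum_eq_zero
    intro p hp
    obtain ⟨-, h1, h2⟩ := Finset.mem_filter.mp hp
    have heq : p.2 = p.1 := le_antisymm (not_lt.mp h1) (not_lt.mp h2)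
    have hzero : ∀ a : ZMod 2, a + a = 0 := by decide
    have hcond : ¬ (B p.1 + B p.2 = x) := by
      rw [heq]
      intro hc
      apply hx
      rw [← hc]
      funext i
      exact hzero _
    simp only [hf, if_neg hcond]
  have hswap : ∑ p ∈ (Finset.univ ×ˢ Finset.univ : Finset (Fin 56 × Fin 56)).filter
      (fun p : Fin 56 × Fin 56 => ¬ p.1 < p.2 ∧ p.2 < p.1), f p
      = ∑ p ∈ (Finset.univ ×ˢ Finset.univ : Finset (Fin 56 × Fin 56)).filter
      (fun p : Fin 56 × Fin 56 => p.1 < p.2), f p := by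
    apply Finset.sum_nbij' (i := Prod.swap) (j := Prod.swap)
    · intro p hp
      simp only [Finset.mem_filter, Finset.mem_product, Finset.mem_univ, true_and,
        and_true, Prod.fst_swap, Prod.snd_swap] at hp ⊢
      exact hp.2
    · intro p hp
      simp only [Finset.mem_filter, Finset.mem_product, Finset.mem_univ, true_and,
        and_true, Prod.fst_swap, Prod.snd_swap] at hp ⊢
      exact ⟨asymm hp, hp⟩
    · intro p _; exact Prod.swap_swap p
    · intro p _; exact Prod.swap_swap p
    · intro p _
      simp only [hf, Prod.fst_swap, Prod.snd_swap]
      exact if_congr (by rw [add_comm]) rfl rfl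
  refine ⟨∑ p ∈ (Finset.univ ×ˢ Finset.univ : Finset (Fin 56 × Fin 56)).filter
      (fun p : Fin 56 × Fin 56 => p.1 < p.2), f p, ?_⟩
  rw [hprod]
  rw [← hsplit, ← hsplit2, hswap, hdiag]
  ring

lemma funV_add_self {k : ℕ} (y : Fin k → ZMod 2) : y + y = 0 := by
  funext i
  have : ∀ a : ZMod 2, a + a = 0 := by decide
  exact this _

end Stmt15Aux

open Stmt15Aux

theorem stmt15 (C : Submodule (ZMod 2) (Fin 56 → ZMod 2))
    (hw : ∀ c ∈ C, c ≠ 0 → wt c = 24 ∨ wt c = 32 ∨ wt c = 56) :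
    Module.finrank (ZMod 2) C ≤ 9 := by
  classical
  by_contra hcon
  push_neg at hcon
  have h10 : 10 ≤ Module.finrank (ZMod 2) C := hcon
  obtain ⟨g, hg⟩ := exists_linearIndependent_of_le_finrank h10
  have hind : LinearIndependent (ZMod 2) (fun j : Fin 10 => (g j : Fin 56 → ZMod 2)) :=
    hg.map' C.subtype C.ker_subtype
  set d : Fin 10 → (Fin 56 → ZMod 2) := fun j => (g j : Fin 56 → ZMod 2) with hd
  have hdC : ∀ j, d j ∈ C := fun j => (g j).2
  set B : Fin 56 → V := fun i j => d j i with hB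
  set cw : V → (Fin 56 → ZMod 2) := fun v => ∑ j, v j • d j with hcw
  have hcwC : ∀ v, cw v ∈ C := fun v =>
    Submodule.sum_mem C (fun j _ => Submodule.smul_mem C _ (hdC j))
  have hcw_app : ∀ v i, cw v i = dp v (B i) := by
    intro v i
    rw [hcw, hB]
    simp only [Finset.sum_apply, Pi.smul_apply, smul_eq_mul]
    rfl
  have hadd : ∀ u v, cw (u + v) = cw u + cw v := by
    intro u v
    rw [hcw]
    simp only []
    rw [← Finset.sum_add_distrib]
    refine Finset.sum_congr rfl fun j _ => ?_
    rw [Pi.add_apply, add_smul]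
  have hinj : ∀ v, cw v = 0 → v = 0 := by
    intro v hv
    rw [hcw] at hv
    have h := Fintype.linearIndependent_iff.mp hind v hv
    funext j; exact h j
  set F : V → ℤ := fun v => ∑ i, eps (dp v (B i)) with hF
  have hFwt : ∀ v, F v = 56 - 2 * ((wt (cw v) : ℕ) : ℤ) := by
    intro v
    rw [hF]
    simp only []
    rw [Finset.sum_congr rfl (fun i _ => by rw [← hcw_app v i])]
    exact sum_eps (cw v)
  set Q : V → ℤ := fun x => ∑ i, ∑ i', if B i + B i' = x then (1:ℤ) else 0 with hQ
  have key : ∀ x : V, (∑ v : V, F v ^ 2 * eps (dp v x)) = 1024 * Q x := by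
    intro x
    have step1 : ∀ v : V, F v ^ 2 * eps (dp v x)
        = ∑ i : Fin 56, ∑ i' : Fin 56, eps (dp v (B i + B i' + x)) := by
      intro v
      rw [hF]
      simp only []
      rw [sq, Finset.sum_mul_sum]
      rw [Finset.sum_mul]
      refine Finset.sum_congr rfl fun i _ => ?_
      rw [Finset.sum_mul]
      refine Finset.sum_congr rfl fun i' _ => ?_
      rw [dp_add, dp_add, eps_add, eps_add]
    rw [Finset.sum_congr rfl (fun v _ => step1 v)]
    rw [Finset.sum_comm]
    rw [Finset.sum_congr rfl (fun i (_ : i ∈ Finset.univ) => Finset.sum_comm)]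
    have step2 : ∀ i i' : Fin 56, (∑ v : V, eps (dp v (B i + B i' + x)))
        = if B i + B i' = x then (1024:ℤ) else 0 := by
      intro i i'
      rw [chr]
      refine if_congr ?_ rfl rfl
      constructor
      · intro h
        exact ((fun_add_eq_zero_iff (B i + B i') x).mp h).symm
      · intro h
        rw [h]
        exact funV_add_self x
    rw [Finset.sum_congr rfl (fun i (_ : i ∈ Finset.univ) =>
      Finset.sum_congr rfl (fun i' _ => step2 i i'))]
    rw [hQ]
    simp only []
    rw [Finset.mul_sum]
    refine Finset.sum_congr rfl fun i _ => ?_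
    rw [Finset.mul_sum]
    refine Finset.sum_congr rfl fun i' _ => ?_
    rw [mul_ite, mul_one, mul_zero]
  have hwt : ∀ v : V, v ≠ 0 → wt (cw v) = 24 ∨ wt (cw v) = 32 ∨ wt (cw v) = 56 := by
    intro v hv
    exact hw (cw v) (hcwC v) (fun h0 => hv (hinj v h0))
  have hcw0 : cw 0 = 0 := by
    rw [hcw]; simp
  have hF0 : F 0 ^ 2 = 3136 := by
    rw [hFwt, hcw0]
    have h0 : wt (0 : Fin 56 → ZMod 2) = 0 := hammingNorm_zero
    rw [h0]
    norm_num
  have h64 : ∀ v : V, v ≠ 0 → wt (cw v) ≠ 56 → F v ^ 2 = 64 := by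
    intro v hv h56
    rcases hwt v hv with h | h | h
    · rw [hFwt, h]; norm_num
    · rw [hFwt, h]; norm_num
    · exact absurd h h56
  have h3136 : ∀ v : V, wt (cw v) = 56 → F v ^ 2 = 3136 := by
    intro v h
    rw [hFwt, h]; norm_num
  have hallones : ∀ v : V, wt (cw v) = 56 → ∀ i, cw v i = 1 := by
    intro v h i
    have hwtdef : wt (cw v) = (Finset.univ.filter (fun i => ¬ cw v i = 0)).card := rfl
    have hcard : (Finset.univ.filter (fun i => ¬ cw v i = 0)).card = Fintype.card (Fin 56) := by
      rw [← hwtdef, h, Fintype.card_fin]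
    have huniv : (Finset.univ.filter (fun i => ¬ cw v i = 0)) = Finset.univ :=
      (Finset.card_eq_iff_eq_univ _).mp hcard
    have hmem : i ∈ Finset.univ.filter (fun i => ¬ cw v i = 0) := by
      rw [huniv]; exact Finset.mem_univ i
    exact z2_ne_zero (Finset.mem_filter.mp hmem).2
  by_cases hex : ∃ v : V, v ≠ 0 ∧ wt (cw v) = 56
  case neg =>
    push_neg at hex
    set x₀ : V := Pi.single 0 1 with hx₀def
    have hx₀ : x₀ ≠ 0 := by
      intro h
      have h1 : x₀ 0 = 0 := by rw [h]; rfl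
      rw [hx₀def] at h1
      simp only [Pi.single_eq_same] at h1
      exact absurd h1 (by decide)
    have hsplit := Finset.add_sum_erase Finset.univ
      (fun v : V => F v ^ 2 * eps (dp v x₀)) (Finset.mem_univ 0)
    have h0term : F 0 ^ 2 * eps (dp 0 x₀) = 3136 := by
      rw [hF0, zero_dp, eps_zero, mul_one]
    have herase : ∑ v ∈ Finset.univ.erase 0, F v ^ 2 * eps (dp v x₀)
        = 64 * ∑ v ∈ Finset.univ.erase 0, eps (dp v x₀) := by
      rw [Finset.mul_sum]
      refine Finset.sum_congr rfl fun v hv => ?_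
      have hvne : v ≠ 0 := (Finset.mem_erase.mp hv).1
      rw [h64 v hvne (hex v hvne)]
    have hchr := chr x₀
    rw [if_neg hx₀] at hchr
    have herase2 : ∑ v ∈ Finset.univ.erase 0, eps (dp v x₀) = -1 := by
      have h2 := Finset.add_sum_erase Finset.univ
        (fun v : V => eps (dp v x₀)) (Finset.mem_univ 0)
      rw [hchr, zero_dp, eps_zero] at h2
      linarith
    have hQ3 : Q x₀ = 3 := by
      have hk := key x₀
      rw [← hsplit] at hk
      rw [h0term, herase, herase2] at hk
      omega
    have hev : Even (Q x₀) := by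
      rw [hQ]
      exact even_Q B x₀ hx₀
    rw [hQ3] at hev
    obtain ⟨m, hm⟩ := hev
    omega
  case pos =>
    obtain ⟨v₀, hv₀ne, hv₀wt⟩ := hex
    have hall : ∀ i, cw v₀ i = 1 := hallones v₀ hv₀wt
    have hdpv₀ : ∀ i, dp v₀ (B i) = 1 := by
      intro i; rw [← hcw_app]; exact hall i
    have hFv₀ : F v₀ ^ 2 = 3136 := h3136 v₀ hv₀wt
    have hne0v₀ : (0 : V) ≠ v₀ := Ne.symm hv₀ne
    have huniq : ∀ v : V, v ≠ 0 → v ≠ v₀ → F v ^ 2 = 64 := by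
      intro v h0 h1
      refine h64 v h0 (fun h56 => ?_)
      have hall2 := hallones v h56
      have hzero : cw (v + v₀) = 0 := by
        rw [hadd]
        funext i
        rw [Pi.add_apply, hall i, hall2 i]
        exact (show (1:ZMod 2) + 1 = 0 by decide)
      have hsum0 := hinj _ hzero
      exact h1 ((fun_add_eq_zero_iff v v₀).mp hsum0).symm
    have hsubset : ({0, v₀} : Finset V) ⊆ Finset.univ := Finset.subset_univ _
    have main : ∀ x : V, 1024 * Q x
        = 3136 * (1 + eps (dp v₀ x)) + 64 * ((if x = 0 then 1024 else 0) - 1 - eps (dp v₀ x)) := by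
      intro x
      rw [← key x]
      rw [← Finset.sum_sdiff hsubset]
      have hs_sum : ∑ v ∈ ({0, v₀} : Finset V), F v ^ 2 * eps (dp v x)
          = 3136 * (1 + eps (dp v₀ x)) := by
        rw [Finset.sum_pair hne0v₀]
        rw [hF0, hFv₀, zero_dp, eps_zero]
        ring
      have hsd : ∑ v ∈ Finset.univ \ ({0, v₀} : Finset V), F v ^ 2 * eps (dp v x)
          = 64 * ∑ v ∈ Finset.univ \ ({0, v₀} : Finset V), eps (dp v x) := by
        rw [Finset.mul_sum]
        refine Finset.sum_congr rfl fun v hv => ?_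
        have hv' := (Finset.mem_sdiff.mp hv).2
        simp only [Finset.mem_insert, Finset.mem_singleton, not_or] at hv'
        rw [huniq v hv'.1 hv'.2]
      have hsd2 : ∑ v ∈ Finset.univ \ ({0, v₀} : Finset V), eps (dp v x)
          = (if x = 0 then 1024 else 0) - 1 - eps (dp v₀ x) := by
        have h2 := Finset.sum_sdiff (f := fun v : V => eps (dp v x)) hsubset
        rw [chr x] at h2
        rw [Finset.sum_pair hne0v₀, zero_dp, eps_zero] at h2
        linarith
      rw [hs_sum, hsd, hsd2]
      ring
    have hQ0 : Q 0 = 70 := by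
      have h := main 0
      rw [dp_zero, eps_zero, if_pos rfl] at h
      omega
    have hQ6 : ∀ x : V, x ≠ 0 → dp v₀ x = 0 → Q x = 6 := by
      intro x hx hdpx
      have h := main x
      rw [hdpx, eps_zero, if_neg hx] at h
      omega
    set r : Fin 56 → ℤ := fun i => ∑ j, if B j = B i then (1:ℤ) else 0 with hr
    have hQ0r : ∑ i, r i = 70 := by
      rw [← hQ0, hQ, hr]
      simp only []
      refine Finset.sum_congr rfl fun i _ => ?_
      refine Finset.sum_congr rfl fun j _ => ?_
      exact if_congr (fun_add_eq_zero_iff (B i) (B j)).symm rfl rfl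
    have hr_pos : ∀ i, 1 ≤ r i := by
      intro i
      rw [hr]
      simp only []
      have h := Finset.single_le_sum (f := fun j => if B j = B i then (1:ℤ) else 0)
        (fun j _ => by split <;> norm_num) (Finset.mem_univ i)
      simpa using h
    have hex2 : ∃ i₀, 2 ≤ r i₀ := by
      by_contra hno
      push_neg at hno
      have honeall : ∀ i, r i = 1 := fun i => by
        have h1 := hr_pos i; have h2 := hno i; omega
      rw [Finset.sum_congr rfl (fun i _ => honeall i)] at hQ0r
      simp at hQ0r
    obtain ⟨i₀, hi₀⟩ := hex2
    have hbound : ∀ j, B j ≠ B i₀ → r i₀ * r j + r j * r i₀ ≤ 6 := by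
      intro j hne
      have hxne : B i₀ + B j ≠ 0 := fun h => hne ((fun_add_eq_zero_iff _ _).mp h)
      have hdpx : dp v₀ (B i₀ + B j) = 0 := by
        rw [dp_add, hdpv₀ i₀, hdpv₀ j]
        decide
      have h6 := hQ6 (B i₀ + B j) hxne hdpx
      have hlow : r i₀ * r j + r j * r i₀ ≤ Q (B i₀ + B j) := by
        have e1 : r i₀ * r j = ∑ k : Fin 56, ∑ l : Fin 56,
            (if B k = B i₀ then (1:ℤ) else 0) * (if B l = B j then (1:ℤ) else 0) := by
          rw [hr]
          simp only []
          exact Finset.sum_mul_sum _ _ _ _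
        have e2 : r j * r i₀ = ∑ k : Fin 56, ∑ l : Fin 56,
            (if B k = B j then (1:ℤ) else 0) * (if B l = B i₀ then (1:ℤ) else 0) := by
          rw [hr]
          simp only []
          exact Finset.sum_mul_sum _ _ _ _
        rw [e1, e2, hQ]
        simp only []
        rw [← Finset.sum_add_distrib]
        refine Finset.sum_le_sum fun k _ => ?_
        rw [← Finset.sum_add_distrib]
        refine Finset.sum_le_sum fun l _ => ?_
        by_cases h1 : B k = B i₀
        · by_cases h2 : B l = B j
          · have hc : B k + B l = B i₀ + B j := by rw [h1, h2]
            have h3 : ¬ B k = B j := fun hcc => hne (h1.symm.trans hcc).symm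
            rw [if_pos h1, if_pos h2, if_pos hc, if_neg h3]
            norm_num
          · rw [if_pos h1, if_neg h2]
            by_cases h3 : B k = B j
            · exact absurd (h1.symm.trans h3).symm hne
            · rw [if_neg h3]
              split_ifs <;> norm_num
        · rw [if_neg h1]
          by_cases h3 : B k = B j
          · by_cases h4 : B l = B i₀
            · have hc : B k + B l = B i₀ + B j := by rw [h3, h4, add_comm]
              rw [if_pos h3, if_pos h4, if_pos hc]
              norm_num
            · rw [if_pos h3, if_neg h4]
              split_ifs <;> norm_num
          · rw [if_neg h3]
            split_ifs <;> norm_num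
      linarith
    have hone : ∀ j, B j ≠ B i₀ → r j = 1 := by
      intro j hne
      have hb := hbound j hne
      have h1 := hr_pos j
      have h2 := hi₀
      nlinarith
    have hsplit := Finset.sum_filter_add_sum_filter_not Finset.univ
      (fun i => B i = B i₀) (fun i => r i)
    have hA : ∑ i ∈ Finset.univ.filter (fun i => B i = B i₀), r i
        = ((Finset.univ.filter (fun i => B i = B i₀)).card : ℤ) * r i₀ := by
      have hcongr : ∀ i ∈ Finset.univ.filter (fun i => B i = B i₀), r i = r i₀ := by
        intro i hi
        have hBi := (Finset.mem_filter.mp hi).2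
        rw [hr]
        simp only []
        refine Finset.sum_congr rfl fun j _ => ?_
        exact if_congr (by rw [hBi]) rfl rfl
      rw [Finset.sum_congr rfl hcongr, Finset.sum_const, nsmul_eq_mul]
    have hcardA : ((Finset.univ.filter (fun i => B i = B i₀)).card : ℤ) = r i₀ := by
      rw [hr]
      simp only []
      rw [Finset.sum_boole]
    have hB1 : ∑ i ∈ Finset.univ.filter (fun i => ¬ B i = B i₀), r i
        = ((Finset.univ.filter (fun i => ¬ B i = B i₀)).card : ℤ) := by
      rw [Finset.sum_congr rfl (fun i hi => hone i (Finset.mem_filter.mp hi).2)]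
      simp
    have hcards : (Finset.univ.filter (fun i => B i = B i₀)).card
        + (Finset.univ.filter (fun i => ¬ B i = B i₀)).card = 56 := by
      rw [Finset.card_filter_add_card_filter_not]
      simp
    rw [hQ0r, hA, hB1] at hsplit
    set t : ℕ := (Finset.univ.filter (fun i => B i = B i₀)).card with htdef
    have hcn : ((Finset.univ.filter (fun i => ¬ B i = B i₀)).card : ℤ) = 56 - (t : ℤ) := by
      rw [htdef]
      push_cast
      omega
    rw [hcn, ← hcardA] at hsplit
    -- hsplit : (t:ℤ) * (t:ℤ) + (56 - t) = 70
    have ht2 : 2 ≤ t := by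
      have := hi₀
      rw [← hcardA] at this
      exact_mod_cast this
    have ht14 : t ≤ 14 := by
      by_contra hgt
      push_neg at hgt
      have h15 : (15 : ℤ) ≤ (t : ℤ) := by exact_mod_cast hgt
      nlinarith
    interval_cases t <;> norm_num at hsplit
end

section
/- Suppose C' is a binary [56, 9] code containing the all-weight-56 codeword (i.e., a codeword of weight 56) whose nonzero weights lie in {24, 32, 56}, arising from an [56,8,{24,32}]_2 code C by adjoining a weight-56 word; then in C' one has a_56 = 1 and a_24 = a_32, and the MacWilliams identities force a_24 = a_32 = 255 and a_2^* = 10. -/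
open Finset

open scoped Classical
set_option maxRecDepth 8000

namespace Stmt16Aux

abbrev V := Fin 56 → ZMod 2

lemma z2ne {x : ZMod 2} (h : x ≠ 0) : x = 1 := by revert h; revert x; decide

lemma addself (x : V) : x + x = 0 := by
  funext i
  have : ∀ y : ZMod 2, y + y = 0 := by decide
  simpa using this (x i)

lemma wt_card (x : V) : wt x = #{i | x i ≠ 0} := rfl

variable (C : Submodule (ZMod 2) V)

/-- codewords as a finset -/
noncomputable def S : Finset V := {c | c ∈ C}

lemma mem_S {c : V} : c ∈ S C ↔ c ∈ C := by simp [S]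

lemma card_S (hk : Module.finrank (ZMod 2) C = 9) : (S C).card = 512 := by
  have h1 : Fintype.card C = 2 ^ 9 := by
    have := Module.card_eq_pow_finrank (K := ZMod 2) (V := C)
    rwa [hk, ZMod.card] at this
  have h2 : Fintype.card C = (S C).card := by
    classical
    rw [show (S C) = Finset.univ.filter (fun c => c ∈ C) from rfl, ← Fintype.card_subtype]
  omega

/-- halving lemma: an additive functional hitting 1 on the code takes value 1
on exactly half the code -/
lemma half_count (hk : Module.finrank (ZMod 2) C = 9)
    (f : V → ZMod 2) (hf : ∀ a b : V, f (a + b) = f a + f b)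
    (d : V) (hd : d ∈ C) (hfd : f d = 1) :
    ({c ∈ S C | f c = 1}).card = 256 := by
  have hz : ∀ x : ZMod 2, (x = 0 ↔ ¬ x = 1) := by decide
  have hinv : ∀ c : V, c + d + d = c := by
    intro c; rw [add_assoc, addself, add_zero]
  have hbij : ({c ∈ S C | f c = 1}).card = ({c ∈ S C | f c = 0}).card := by
    apply Finset.card_bij' (fun c _ => c + d) (fun c _ => c + d)
    · intro a ha
      rw [Finset.mem_filter, mem_S] at ha ⊢
      exact ⟨C.add_mem ha.1 hd, by rw [hf, ha.2, hfd]; decide⟩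
    · intro a ha
      rw [Finset.mem_filter, mem_S] at ha ⊢
      exact ⟨C.add_mem ha.1 hd, by rw [hf, ha.2, hfd]; decide⟩
    · intro a _; exact hinv a
    · intro a _; exact hinv a
  have hsplit : ({c ∈ S C | f c = 1}).card + ({c ∈ S C | f c = 0}).card = 512 := by
    have := Finset.card_filter_add_card_filter_not
      (s := S C) (p := fun c => f c = 1)
    rw [card_S C hk] at this
    have he : {c ∈ S C | ¬ f c = 1} = {c ∈ S C | f c = 0} := by
      apply Finset.filter_congr; intro c _; rw [hz]
    rw [← he]; exact this
  omega

lemma wd_eq (C : Submodule (ZMod 2) V) (i : ℕ) :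
    wd C i = ({c ∈ S C | wt c = i}).card := by
  rw [wd, Nat.card_eq_fintype_card, Fintype.card_subtype]
  congr 1
  ext c
  simp [S, Finset.mem_filter]

lemma all_one_of_wt56 (x : V) (h : wt x = 56) : x = 1 := by
  have h1 : ({i | x i ≠ 0} : Finset (Fin 56)) = Finset.univ := by
    apply Finset.eq_univ_of_card
    rw [← wt_card, h]; simp
  funext i
  have hi : x i ≠ 0 := by
    have := Finset.mem_univ i
    rw [← h1, Finset.mem_filter] at this
    exact this.2
  exact z2ne hi

lemma wt_one : wt (1 : V) = 56 := by
  rw [wt_card]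
  have : ({i | (1 : V) i ≠ 0} : Finset (Fin 56)) = Finset.univ := by
    apply Finset.eq_univ_iff_forall.2
    intro i
    simp only [Finset.mem_filter, Finset.mem_univ, true_and]
    exact one_ne_zero
  rw [this]; simp

lemma wt_flip (x : V) : wt x + wt (x + 1) = 56 := by
  have h1 : ({i | (x + 1) i ≠ 0} : Finset (Fin 56)) = ({i | ¬ x i ≠ 0} : Finset (Fin 56)) := by
    apply Finset.filter_congr
    intro i _
    have : ∀ y : ZMod 2, (y + 1 ≠ 0 ↔ ¬ y ≠ 0) := by decide
    simpa using this (x i)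
  rw [wt_card, wt_card, h1]
  have := Finset.card_filter_add_card_filter_not
    (s := (Finset.univ : Finset (Fin 56))) (p := fun i => x i ≠ 0)
  simpa using this

lemma wt_zero : wt (0 : V) = 0 := by
  rw [wt_card]
  simp

lemma eq_zero_of_wt {x : V} (h : wt x = 0) : x = 0 := by
  rw [wt_card, Finset.card_eq_zero] at h
  funext i
  by_contra hi
  have : i ∈ ({i | x i ≠ 0} : Finset (Fin 56)) := by
    simp only [Finset.mem_filter, Finset.mem_univ, true_and]
    simpa using hi
  rw [h] at this
  exact absurd this (Finset.notMem_empty i)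

lemma card_flip (C : Submodule (ZMod 2) V) (hone : (1 : V) ∈ C) (w w' : ℕ)
    (hww : w + w' = 56) :
    ({c ∈ S C | wt c = w}).card = ({c ∈ S C | wt c = w'}).card := by
  apply Finset.card_bij' (fun c _ => c + 1) (fun c _ => c + 1)
  · intro a _; rw [add_assoc, addself, add_zero]
  · intro a _; rw [add_assoc, addself, add_zero]
  · intro a ha
    rw [Finset.mem_filter, mem_S] at ha ⊢
    refine ⟨C.add_mem ha.1 hone, ?_⟩
    have h2 := wt_flip a
    omega
  · intro a ha
    rw [Finset.mem_filter, mem_S] at ha ⊢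
    refine ⟨C.add_mem ha.1 hone, ?_⟩
    have h2 := wt_flip a
    omega

lemma card_partition (C : Submodule (ZMod 2) V)
    (hw : ∀ c ∈ C, c ≠ 0 → wt c = 24 ∨ wt c = 32 ∨ wt c = 56) :
    (S C).card = ({c ∈ S C | wt c = 0}).card + ({c ∈ S C | wt c = 24}).card
      + ({c ∈ S C | wt c = 32}).card + ({c ∈ S C | wt c = 56}).card := by
  have h := Finset.card_eq_sum_card_fiberwise (s := S C)
      (t := ({0, 24, 32, 56} : Finset ℕ)) (f := wt) ?_
  · rw [h]
    rw [show ({0, 24, 32, 56} : Finset ℕ) = insert 0 (insert 24 (insert 32 {56})) from rfl]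
    rw [Finset.sum_insert (by decide), Finset.sum_insert (by decide),
      Finset.sum_insert (by decide), Finset.sum_singleton]
    ring
  · intro c hc
    rw [Finset.mem_coe, mem_S] at hc
    by_cases h0 : c = 0
    · subst h0
      simp [wt_zero]
    · rcases hw c hc h0 with h | h | h <;> simp [h]

lemma wt0_set (C : Submodule (ZMod 2) V) :
    ({c ∈ S C | wt c = 0}) = {0} := by
  ext c
  simp only [Finset.mem_filter, mem_S, Finset.mem_singleton]
  constructor
  · rintro ⟨_, h⟩; exact eq_zero_of_wt h
  · rintro rfl; exact ⟨C.zero_mem, wt_zero⟩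

lemma wt56_set (C : Submodule (ZMod 2) V) (hone : (1 : V) ∈ C) :
    ({c ∈ S C | wt c = 56}) = {1} := by
  ext c
  simp only [Finset.mem_filter, mem_S, Finset.mem_singleton]
  constructor
  · rintro ⟨_, h⟩; exact all_one_of_wt56 c h
  · rintro rfl; exact ⟨hone, wt_one⟩

lemma z2cases (x : ZMod 2) : x = 0 ∨ x = 1 := by revert x; decide

lemma wt_card1 (x : V) : wt x = ({i | x i = 1} : Finset (Fin 56)).card := by
  rw [wt_card]
  congr 1
  apply Finset.filter_congr
  intro i _
  have : ∀ y : ZMod 2, (y ≠ 0 ↔ y = 1) := by decide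
  exact this (x i)

/-- number of codewords with 1 in both coordinates i and j -/
noncomputable def N (C : Submodule (ZMod 2) V) (i j : Fin 56) : ℕ :=
  ({c ∈ S C | c i = 1 ∧ c j = 1}).card

lemma moment2 (C : Submodule (ZMod 2) V) :
    ∑ c ∈ S C, (wt c) * (wt c) = ∑ i : Fin 56, ∑ j : Fin 56, N C i j := by
  have hwt : ∀ c : V, wt c = ∑ i : Fin 56, (if c i = 1 then 1 else 0) := by
    intro c
    rw [wt_card1, Finset.card_filter]
  have step : ∀ c : V, (wt c) * (wt c)
      = ∑ i : Fin 56, ∑ j : Fin 56, (if c i = 1 ∧ c j = 1 then 1 else 0) := by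
    intro c
    rw [hwt c, Finset.sum_mul_sum]
    refine Finset.sum_congr rfl fun i _ => Finset.sum_congr rfl fun j _ => ?_
    by_cases h1 : c i = 1 <;> by_cases h2 : c j = 1 <;> simp [h1, h2]
  calc ∑ c ∈ S C, (wt c) * (wt c)
      = ∑ c ∈ S C, ∑ i : Fin 56, ∑ j : Fin 56, (if c i = 1 ∧ c j = 1 then 1 else 0) :=
        Finset.sum_congr rfl fun c _ => step c
    _ = ∑ i : Fin 56, ∑ c ∈ S C, ∑ j : Fin 56, (if c i = 1 ∧ c j = 1 then 1 else 0) :=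
        Finset.sum_comm
    _ = ∑ i : Fin 56, ∑ j : Fin 56, ∑ c ∈ S C, (if c i = 1 ∧ c j = 1 then 1 else 0) :=
        Finset.sum_congr rfl fun i _ => Finset.sum_comm
    _ = ∑ i : Fin 56, ∑ j : Fin 56, N C i j := by
        refine Finset.sum_congr rfl fun i _ => Finset.sum_congr rfl fun j _ => ?_
        rw [N, Finset.card_filter]

lemma N_eq_col (C : Submodule (ZMod 2) V) (hk : Module.finrank (ZMod 2) C = 9)
    (i j : Fin 56) (hfi : ∃ c ∈ C, c i ≠ 0) (heq : ∀ c ∈ C, c i = c j) :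
    N C i j = 256 := by
  obtain ⟨d, hd, hdi⟩ := hfi
  have h1 : ({c ∈ S C | c i = 1 ∧ c j = 1}) = ({c ∈ S C | c i = 1}) := by
    apply Finset.filter_congr
    intro c hc
    rw [mem_S] at hc
    have := heq c hc
    constructor
    · exact fun h => h.1
    · exact fun h => ⟨h, by rw [← this]; exact h⟩
  rw [N, h1]
  exact half_count C hk (fun c => c i) (fun a b => rfl) d hd (z2ne hdi)

lemma N_ne_col (C : Submodule (ZMod 2) V) (hk : Module.finrank (ZMod 2) C = 9)
    (i j : Fin 56) (hfi : ∃ c ∈ C, c i ≠ 0) (hfj : ∃ c ∈ C, c j ≠ 0)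
    (hne : ¬ ∀ c ∈ C, c i = c j) :
    N C i j = 128 := by
  push_neg at hne
  obtain ⟨d, hd, hdij⟩ := hne
  obtain ⟨u, hu, hui⟩ := hfi
  obtain ⟨v, hv, hvj⟩ := hfj
  have hAi : ({c ∈ S C | c i = 1}).card = 256 :=
    half_count C hk (fun c => c i) (fun a b => rfl) u hu (z2ne hui)
  have hAj : ({c ∈ S C | c j = 1}).card = 256 :=
    half_count C hk (fun c => c j) (fun a b => rfl) v hv (z2ne hvj)
  have hAd : ({c ∈ S C | c i + c j = 1}).card = 256 := by
    apply half_count C hk (fun c => c i + c j) (fun a b => by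
      simp only [Pi.add_apply]; ring) d hd
    have : ∀ x y : ZMod 2, x ≠ y → x + y = 1 := by decide
    exact this _ _ hdij
  have hxor : ∀ x y : ZMod 2, (x = 1 ∨ y = 1) ↔ (x + y = 1 ∨ (x = 1 ∧ y = 1)) := by decide
  have hdisj : ∀ x y : ZMod 2, x + y = 1 → ¬ (x = 1 ∧ y = 1) := by decide
  have hunion : ({c ∈ S C | c i = 1}) ∪ ({c ∈ S C | c j = 1})
      = ({c ∈ S C | c i + c j = 1}) ∪ ({c ∈ S C | c i = 1 ∧ c j = 1}) := by
    ext c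
    simp only [Finset.mem_union, Finset.mem_filter]
    have := hxor (c i) (c j)
    tauto
  have hinter : ({c ∈ S C | c i = 1}) ∩ ({c ∈ S C | c j = 1})
      = ({c ∈ S C | c i = 1 ∧ c j = 1}) := by
    ext c
    simp only [Finset.mem_inter, Finset.mem_filter]
    tauto
  have hD : Disjoint ({c ∈ S C | c i + c j = 1}) ({c ∈ S C | c i = 1 ∧ c j = 1}) := by
    rw [Finset.disjoint_left]
    intro c hc hc'
    rw [Finset.mem_filter] at hc hc'
    exact hdisj _ _ hc.2 hc'.2
  have key := Finset.card_union_add_card_inter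
    ({c ∈ S C | c i = 1}) ({c ∈ S C | c j = 1})
  rw [hunion, hinter, Finset.card_union_of_disjoint hD, hAi, hAj, hAd] at key
  unfold N
  clear hxor hdisj hD hunion hinter hdij hd hui hu hvj hv
  generalize ({c ∈ S C | c i = 1 ∧ c j = 1}).card = X at key ⊢
  clear hAi hAj hAd
  omega

/-- the weight-two word supported on i and j -/
def eij (i j : Fin 56) : V := Pi.single i 1 + Pi.single j 1

lemma eij_apply (i j k : Fin 56) :
    eij i j k = (if k = i then 1 else 0) + (if k = j then 1 else 0) := by
  simp [eij, Pi.single_apply]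

lemma wt_eij (i j : Fin 56) (hij : i ≠ j) : wt (eij i j) = 2 := by
  rw [wt_card]
  have hs : ({k | eij i j k ≠ 0} : Finset (Fin 56)) = {i, j} := by
    ext k
    simp only [Finset.mem_filter, Finset.mem_univ, true_and, Finset.mem_insert,
      Finset.mem_singleton, eij_apply]
    by_cases h1 : k = i
    · by_cases h2 : k = j
      · exact absurd (h1.symm.trans h2) hij
      · simp [h1, h2, hij]
    · by_cases h2 : k = j <;> simp [h1, h2, hij, hij.symm]
  rw [hs, Finset.card_pair hij]

lemma eij_sum (i j : Fin 56) (c : V) :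
    ∑ k, eij i j k * c k = c i + c j := by
  have hpt : ∀ k, eij i j k * c k
      = (if k = i then c k else 0) + (if k = j then c k else 0) := by
    intro k
    rw [eij_apply, add_mul]
    congr 1 <;> split_ifs <;> simp
  rw [Finset.sum_congr rfl fun k _ => hpt k, Finset.sum_add_distrib,
    Finset.sum_ite_eq' Finset.univ i c, Finset.sum_ite_eq' Finset.univ j c]
  simp

lemma mem_dual_iff (C : Submodule (ZMod 2) V) (x : V) :
    x ∈ dualCode C ↔ ∀ c ∈ C, ∑ k, x k * c k = 0 := Iff.rfl

lemma eij_mem_dual (C : Submodule (ZMod 2) V) (i j : Fin 56) :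
    (eij i j ∈ dualCode C) ↔ ∀ c ∈ C, c i = c j := by
  rw [mem_dual_iff]
  have hz : ∀ x y : ZMod 2, (x + y = 0 ↔ x = y) := by decide
  constructor
  · intro h c hc
    have := h c hc
    rw [eij_sum] at this
    exact (hz _ _).1 this
  · intro h c hc
    rw [eij_sum]
    exact (hz _ _).2 (h c hc)

lemma wt2_form (x : V) (h2 : wt x = 2) : ∃ i j, i ≠ j ∧ x = eij i j := by
  rw [wt_card] at h2
  obtain ⟨i, j, hij, hset⟩ := Finset.card_eq_two.1 h2
  refine ⟨i, j, hij, ?_⟩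
  have hmem : ∀ k', x k' ≠ 0 ↔ (k' = i ∨ k' = j) := by
    intro k'
    constructor
    · intro h
      have : k' ∈ ({k | x k ≠ 0} : Finset (Fin 56)) := by
        simp only [Finset.mem_filter, Finset.mem_univ, true_and]; exact h
      rw [hset] at this
      simpa using this
    · intro h
      have : k' ∈ ({i, j} : Finset (Fin 56)) := by simpa using h
      rw [← hset] at this
      simp only [Finset.mem_filter, Finset.mem_univ, true_and] at this
      exact this
  funext k
  rw [eij_apply]
  by_cases h1 : k = i
  · have hx : x k ≠ 0 := (hmem k).2 (Or.inl h1)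
    rw [z2ne hx, if_pos h1, if_neg (by rw [h1]; exact hij)]
    simp
  · by_cases h2 : k = j
    · have hx : x k ≠ 0 := (hmem k).2 (Or.inr h2)
      rw [z2ne hx, if_pos h2, if_neg h1]
      simp
    · have hx : ¬ x k ≠ 0 := fun h => (h1 ((hmem k).1 h |>.resolve_right h2))
      push_neg at hx
      rw [hx, if_neg h1, if_neg h2]
      simp

lemma eij_inj {p q i j : Fin 56} (hpq : p ≠ q) (hij : i ≠ j)
    (h : eij p q = eij i j) : (p = i ∧ q = j) ∨ (p = j ∧ q = i) := by
  have hone : (1 : ZMod 2) ≠ 0 := one_ne_zero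
  have hp : p = i ∨ p = j := by
    have := congrFun h p
    rw [eij_apply, eij_apply, if_pos rfl, if_neg hpq] at this
    by_contra hc
    push_neg at hc
    rw [if_neg hc.1, if_neg hc.2] at this
    simp at this
  have hq : q = i ∨ q = j := by
    have := congrFun h q
    rw [eij_apply, eij_apply, if_neg (Ne.symm hpq), if_pos rfl] at this
    by_contra hc
    push_neg at hc
    rw [if_neg hc.1, if_neg hc.2] at this
    simp at this
  rcases hp with hp | hp <;> rcases hq with hq | hq
  · exact absurd (hp.trans hq.symm) hpq
  · exact Or.inl ⟨hp, hq⟩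
  · exact Or.inr ⟨hp, hq⟩
  · exact absurd (hp.trans hq.symm) hpq

lemma eij_comm (i j : Fin 56) : eij i j = eij j i := by
  show Pi.single i 1 + Pi.single j 1 = Pi.single j 1 + Pi.single i 1
  rw [add_comm]

lemma fiber_sum (C : Submodule (ZMod 2) V) (w : ℕ) :
    ∑ c ∈ {c ∈ S C | wt c = w}, wt c * wt c
      = ({c ∈ S C | wt c = w}).card * (w * w) := by
  have h : ∀ c ∈ ({c ∈ S C | wt c = w}), wt c * wt c = w * w := fun c hc => by
    rw [(Finset.mem_filter.1 hc).2]
  rw [Finset.sum_congr rfl h, Finset.sum_const, smul_eq_mul]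

end Stmt16Aux

theorem stmt16 (C : Submodule (ZMod 2) (Fin 56 → ZMod 2))
    (hk : Module.finrank (ZMod 2) C = 9) (hfull : FullLength C)
    (hw : ∀ c ∈ C, c ≠ 0 → wt c = 24 ∨ wt c = 32 ∨ wt c = 56)
    (h56 : ∃ c ∈ C, wt c = 56) :
    wd C 56 = 1 ∧ wd C 24 = wd C 32 ∧ wd C 24 = 255 ∧
    wd (dualCode C) 2 = 10 := by
  classical
  open Stmt16Aux in
  obtain ⟨c0, hc0, hc056⟩ := h56
  have hone : (1 : Fin 56 → ZMod 2) ∈ C := by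
    have h := Stmt16Aux.all_one_of_wt56 c0 hc056
    rwa [h] at hc0
  have hS := Stmt16Aux.card_S C hk
  have hwd56 : wd C 56 = 1 := by
    rw [Stmt16Aux.wd_eq, Stmt16Aux.wt56_set C hone, Finset.card_singleton]
  have h0card : ({c ∈ Stmt16Aux.S C | wt c = 0}).card = 1 := by
    rw [Stmt16Aux.wt0_set, Finset.card_singleton]
  have h56card : ({c ∈ Stmt16Aux.S C | wt c = 56}).card = 1 := by
    rw [Stmt16Aux.wt56_set C hone, Finset.card_singleton]
  have hflip : ({c ∈ Stmt16Aux.S C | wt c = 24}).card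
      = ({c ∈ Stmt16Aux.S C | wt c = 32}).card :=
    Stmt16Aux.card_flip C hone 24 32 (by norm_num)
  have hpart := Stmt16Aux.card_partition C hw
  rw [hS, h0card, h56card] at hpart
  have h24 : ({c ∈ Stmt16Aux.S C | wt c = 24}).card = 255 := by
    generalize hA : ({c ∈ Stmt16Aux.S C | wt c = 24}).card = A at hflip hpart
    generalize hB : ({c ∈ Stmt16Aux.S C | wt c = 32}).card = B at hflip hpart
    omega
  have h32 : ({c ∈ Stmt16Aux.S C | wt c = 32}).card = 255 := by
    rw [← hflip]; exact h24
  have hwd2432 : wd C 24 = wd C 32 := by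
    rw [Stmt16Aux.wd_eq, Stmt16Aux.wd_eq, hflip]
  have hwd24 : wd C 24 = 255 := by rw [Stmt16Aux.wd_eq, h24]
  refine ⟨hwd56, hwd2432, hwd24, ?_⟩
  -- second moment, both sides
  have hmaps : ∀ c ∈ Stmt16Aux.S C, wt c ∈ ({0, 24, 32, 56} : Finset ℕ) := by
    intro c hc
    rw [Stmt16Aux.mem_S] at hc
    by_cases h0 : c = 0
    · subst h0; simp [Stmt16Aux.wt_zero]
    · rcases hw c hc h0 with h | h | h <;> simp [h]
  have hL : ∑ c ∈ Stmt16Aux.S C, wt c * wt c = 411136 := by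
    rw [← Finset.sum_fiberwise_of_maps_to hmaps (fun c => wt c * wt c)]
    rw [show ({0, 24, 32, 56} : Finset ℕ) = insert 0 (insert 24 (insert 32 {56})) from rfl,
      Finset.sum_insert (by decide), Finset.sum_insert (by decide),
      Finset.sum_insert (by decide), Finset.sum_singleton]
    rw [Stmt16Aux.fiber_sum, Stmt16Aux.fiber_sum, Stmt16Aux.fiber_sum, Stmt16Aux.fiber_sum,
      h0card, h24, h32, h56card]
    norm_num
  have hQcard : (Finset.filter (fun p : Fin 56 × Fin 56 => ∀ c ∈ C, c p.1 = c p.2)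
      (Finset.univ ×ˢ Finset.univ)).card = 76 := by
    have hR := Stmt16Aux.moment2 C
    rw [hL] at hR
    rw [← Finset.sum_product'] at hR
    rw [← Finset.sum_filter_add_sum_filter_not (Finset.univ ×ˢ Finset.univ)
      (fun p => ∀ c ∈ C, c p.1 = c p.2) (fun p => Stmt16Aux.N C p.1 p.2)] at hR
    have hA : ∑ p ∈ Finset.filter (fun p : Fin 56 × Fin 56 => ∀ c ∈ C, c p.1 = c p.2)
        (Finset.univ ×ˢ Finset.univ), Stmt16Aux.N C p.1 p.2
        = (Finset.filter (fun p : Fin 56 × Fin 56 => ∀ c ∈ C, c p.1 = c p.2)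
          (Finset.univ ×ˢ Finset.univ)).card * 256 := by
      rw [Finset.sum_congr rfl (fun p hp => Stmt16Aux.N_eq_col C hk p.1 p.2 (hfull p.1)
        ((Finset.mem_filter.1 hp).2)), Finset.sum_const, smul_eq_mul]
    have hB : ∑ p ∈ Finset.filter (fun p : Fin 56 × Fin 56 => ¬ (∀ c ∈ C, c p.1 = c p.2))
        (Finset.univ ×ˢ Finset.univ), Stmt16Aux.N C p.1 p.2
        = (Finset.filter (fun p : Fin 56 × Fin 56 => ¬ (∀ c ∈ C, c p.1 = c p.2))
          (Finset.univ ×ˢ Finset.univ)).card * 128 := by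
      rw [Finset.sum_congr rfl (fun (p : Fin 56 × Fin 56) hp => Stmt16Aux.N_ne_col C hk p.1 p.2
        (hfull p.1) (hfull p.2) ((Finset.mem_filter.1 hp).2)), Finset.sum_const, smul_eq_mul]
    have hC : (Finset.filter (fun p : Fin 56 × Fin 56 => ∀ c ∈ C, c p.1 = c p.2)
        (Finset.univ ×ˢ Finset.univ)).card
        + (Finset.filter (fun p : Fin 56 × Fin 56 => ¬ (∀ c ∈ C, c p.1 = c p.2))
          (Finset.univ ×ˢ Finset.univ)).card = 3136 := by
      have := Finset.card_filter_add_card_filter_not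
        (s := (Finset.univ ×ˢ Finset.univ : Finset (Fin 56 × Fin 56)))
        (p := fun p => ∀ c ∈ C, c p.1 = c p.2)
      simpa using this
    rw [hA, hB] at hR
    generalize hX : (Finset.filter (fun p : Fin 56 × Fin 56 => ∀ c ∈ C, c p.1 = c p.2)
      (Finset.univ ×ˢ Finset.univ)).card = X at hR hC ⊢
    generalize hY : (Finset.filter (fun p : Fin 56 × Fin 56 => ¬ (∀ c ∈ C, c p.1 = c p.2))
      (Finset.univ ×ˢ Finset.univ)).card = Y at hR hC
    clear hX hY
    clear * - hR hC
    omega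
  -- off-diagonal equal pairs
  have hPcard : (Finset.filter (fun p : Fin 56 × Fin 56 => p.1 ≠ p.2 ∧ ∀ c ∈ C, c p.1 = c p.2)
      (Finset.univ ×ˢ Finset.univ)).card = 20 := by
    have h1 := Finset.card_filter_add_card_filter_not
      (s := Finset.filter (fun p : Fin 56 × Fin 56 => ∀ c ∈ C, c p.1 = c p.2)
        (Finset.univ ×ˢ Finset.univ))
      (p := fun p : Fin 56 × Fin 56 => p.1 = p.2)
    have hdiag : Finset.filter (fun p : Fin 56 × Fin 56 => p.1 = p.2)
        (Finset.filter (fun p : Fin 56 × Fin 56 => ∀ c ∈ C, c p.1 = c p.2)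
          (Finset.univ ×ˢ Finset.univ))
        = Finset.diag (Finset.univ : Finset (Fin 56)) := by
      ext p
      rw [Finset.mem_diag]
      simp only [Finset.mem_filter]
      constructor
      · rintro ⟨⟨hp, _⟩, h⟩; exact ⟨Finset.mem_univ _, h⟩
      · rintro ⟨hp, h⟩
        exact ⟨⟨Finset.mem_product.2 ⟨Finset.mem_univ _, Finset.mem_univ _⟩, fun c _ => by rw [h]⟩, h⟩
    have hswap : Finset.filter (fun p : Fin 56 × Fin 56 => ¬ p.1 = p.2)
        (Finset.filter (fun p : Fin 56 × Fin 56 => ∀ c ∈ C, c p.1 = c p.2)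
          (Finset.univ ×ˢ Finset.univ))
        = Finset.filter (fun p : Fin 56 × Fin 56 => p.1 ≠ p.2 ∧ ∀ c ∈ C, c p.1 = c p.2)
          (Finset.univ ×ˢ Finset.univ) := by
      ext p
      simp only [Finset.mem_filter, Ne]
      tauto
    rw [hdiag, hswap, Finset.diag_card, hQcard] at h1
    simp only [Finset.card_univ, Fintype.card_fin] at h1
    generalize hX : (Finset.filter (fun p : Fin 56 × Fin 56 => p.1 ≠ p.2 ∧ ∀ c ∈ C, c p.1 = c p.2)
      (Finset.univ ×ˢ Finset.univ)).card = X at h1 ⊢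
    clear hX
    clear * - h1
    omega
  -- dual weight-2 words
  have hD2 : ({x ∈ Stmt16Aux.S (dualCode C) | wt x = 2}).card = 10 := by
    set P := Finset.filter (fun p : Fin 56 × Fin 56 => p.1 ≠ p.2 ∧ ∀ c ∈ C, c p.1 = c p.2)
      (Finset.univ ×ˢ Finset.univ) with hP
    set D2 := ({x ∈ Stmt16Aux.S (dualCode C) | wt x = 2}) with hD2def
    have hmapsto : ∀ p ∈ P, Stmt16Aux.eij p.1 p.2 ∈ D2 := by
      intro p hp
      rw [hP, Finset.mem_filter] at hp
      obtain ⟨-, hne, hQ⟩ := hp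
      rw [hD2def, Finset.mem_filter, Stmt16Aux.mem_S]
      exact ⟨(Stmt16Aux.eij_mem_dual C p.1 p.2).2 hQ, Stmt16Aux.wt_eij p.1 p.2 hne⟩
    have key := Finset.card_eq_sum_card_fiberwise hmapsto
    have hfib : ∀ b ∈ D2, (P.filter (fun p => Stmt16Aux.eij p.1 p.2 = b)).card = 2 := by
      intro b hb
      rw [hD2def, Finset.mem_filter, Stmt16Aux.mem_S] at hb
      obtain ⟨hbdual, hbwt⟩ := hb
      obtain ⟨i, j, hij, rfl⟩ := Stmt16Aux.wt2_form b hbwt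
      have hQij : ∀ c ∈ C, c i = c j := (Stmt16Aux.eij_mem_dual C i j).1 hbdual
      have hfeq : P.filter (fun p => Stmt16Aux.eij p.1 p.2 = Stmt16Aux.eij i j)
          = ({(i, j), (j, i)} : Finset (Fin 56 × Fin 56)) := by
        ext p
        rw [Finset.mem_filter, hP, Finset.mem_filter]
        simp only [Finset.mem_insert, Finset.mem_singleton]
        constructor
        · rintro ⟨⟨-, hne, -⟩, heq⟩
          rcases Stmt16Aux.eij_inj hne hij heq with ⟨h1, h2⟩ | ⟨h1, h2⟩
          · left; exact Prod.ext h1 h2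
          · right; exact Prod.ext h1 h2
        · rintro (rfl | rfl)
          · exact ⟨⟨Finset.mem_product.2 ⟨Finset.mem_univ _, Finset.mem_univ _⟩, hij, hQij⟩, rfl⟩
          · refine ⟨⟨Finset.mem_product.2 ⟨Finset.mem_univ _, Finset.mem_univ _⟩, hij.symm,
              fun c hc => (hQij c hc).symm⟩, ?_⟩
            exact Stmt16Aux.eij_comm j i
      rw [hfeq]
      apply Finset.card_pair
      intro h
      exact hij (congrArg Prod.fst h)
    rw [Finset.sum_congr rfl hfib, Finset.sum_const, smul_eq_mul] at key
    rw [hPcard] at key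
    generalize hX : D2.card = X at key ⊢
    clear * - key
    omega
  rw [Stmt16Aux.wd_eq, hD2]
end
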